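/- In the setting of the family of examples with constant parameters (α, β_a, β_b, ε, and Γ_{i|j|k|l} = Γ for all i,j,k,l): if ε = 1 and α = 1, then r satisfies the braid equation if and only if β_a = β_b, or β_a ≠ β_b and 2Γ + 2β_aβ_b = 0. -/

import Mathlib

open Finsupp

namespace BraidPaper

/-- The set of ordered pairs `Y = {(a,b) : a ≤ b}` indexing the basis of the
incidence coalgebra of `X`. -/
abbrev Y (X : Type) [PartialOrder X] : Type := {p : X × X // p.1 ≤ p.2}

/-- The incidence coalgebra `D` of `X`, modelled as the free `K`-module on `Y`. -/
abbrev Inc (K X : Type) [Field K] [PartialOrder X] : Type := Y X →₀ K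

/-- `D ⊗ D`, modelled as the free `K`-module on `Y × Y`. -/
abbrev Inc2 (K X : Type) [Field K] [PartialOrder X] : Type := (Y X × Y X) →₀ K

/-- `D ⊗ D ⊗ D`, modelled as the free `K`-module on `Y × Y × Y`. -/
abbrev Inc3 (K X : Type) [Field K] [PartialOrder X] : Type := (Y X × Y X × Y X) →₀ K

/-- `(D ⊗ D) ⊗ (D ⊗ D)`, modelled as the free `K`-module on `(Y × Y) × (Y × Y)`. -/
abbrev Inc4 (K X : Type) [Field K] [PartialOrder X] : Type :=
  ((Y X × Y X) × (Y X × Y X)) →₀ K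

variable {K X : Type} [Field K] [PartialOrder X] [DecidableEq X]
  [@DecidableRel X X (· ≤ ·)] [LocallyFiniteOrder X]

/-- The coefficients `λ_{a|b|c|d}^{e|f|g|h}` of a linear endomorphism of `D ⊗ D`
(defined to be `0` unless `a ≤ b`, `c ≤ d`, `e ≤ f` and `g ≤ h`). -/
noncomputable def lam (r : Inc2 K X →ₗ[K] Inc2 K X) (a b c d e f g h : X) : K :=
  if h1 : a ≤ b then if h2 : c ≤ d then if h3 : e ≤ f then if h4 : g ≤ h then
    (r (single (⟨(a, b), h1⟩, ⟨(c, d), h2⟩) 1)) (⟨(e, f), h3⟩, ⟨(g, h), h4⟩)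
  else 0 else 0 else 0 else 0

/-- The counit of `D ⊗ D`. -/
noncomputable def eps2 : Inc2 K X →ₗ[K] K :=
  Finsupp.lsum K fun pq =>
    if pq.1.1.1 = pq.1.1.2 ∧ pq.2.1.1 = pq.2.1.2 then LinearMap.id else 0

/-- The comultiplication of `D ⊗ D`. -/
noncomputable def comul2 : Inc2 K X →ₗ[K] Inc4 K X :=
  Finsupp.lsum K fun pq => LinearMap.toSpanSingleton K _ <|
    ∑ x ∈ (Finset.Icc pq.1.1.1 pq.1.1.2).attach,
      ∑ y ∈ (Finset.Icc pq.2.1.1 pq.2.1.2).attach,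
        single ((⟨(pq.1.1.1, x.1), (Finset.mem_Icc.mp x.2).1⟩,
                 ⟨(pq.2.1.1, y.1), (Finset.mem_Icc.mp y.2).1⟩),
                (⟨(x.1, pq.1.1.2), (Finset.mem_Icc.mp x.2).2⟩,
                 ⟨(y.1, pq.2.1.2), (Finset.mem_Icc.mp y.2).2⟩)) (1 : K)

/-- The tensor product `r ⊗ s` of two linear endomorphisms of `D ⊗ D`, in the
free-module model. -/
noncomputable def tmap (r s : Inc2 K X →ₗ[K] Inc2 K X) : Inc4 K X →ₗ[K] Inc4 K X :=
  Finsupp.lsum K fun pq => LinearMap.toSpanSingleton K _ <|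
    (r (single pq.1 1)).sum fun p a => (s (single pq.2 1)).sum fun q b =>
      single (p, q) (a * b)

/-- `r` is a coalgebra automorphism of `D ⊗ D`. -/
def IsCoalgAuto (r : Inc2 K X →ₗ[K] Inc2 K X) : Prop :=
  Function.Bijective ⇑r ∧ comul2 ∘ₗ r = tmap r r ∘ₗ comul2 ∧ eps2 ∘ₗ r = eps2

/-- `D ⊗ ε : D ⊗ D → D`. -/
noncomputable def rcu : Inc2 K X →ₗ[K] Inc K X :=
  Finsupp.lsum K fun pq => LinearMap.toSpanSingleton K _ <|
    if pq.2.1.1 = pq.2.1.2 then single pq.1 (1 : K) else 0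

/-- `ε ⊗ D : D ⊗ D → D`. -/
noncomputable def lcu : Inc2 K X →ₗ[K] Inc K X :=
  Finsupp.lsum K fun pq => LinearMap.toSpanSingleton K _ <|
    if pq.1.1.1 = pq.1.1.2 then single pq.2 (1 : K) else 0

/-- `(D ⊗ σ) ∘ (Δ ⊗ D)` where `σ := (D ⊗ ε) ∘ r`. -/
noncomputable def ndeg1 (r : Inc2 K X →ₗ[K] Inc2 K X) : Inc2 K X →ₗ[K] Inc2 K X :=
  Finsupp.lsum K fun pq => LinearMap.toSpanSingleton K _ <|
    ∑ x ∈ (Finset.Icc pq.1.1.1 pq.1.1.2).attach,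
      ((rcu ∘ₗ r) (single ((⟨(x.1, pq.1.1.2), (Finset.mem_Icc.mp x.2).2⟩ : Y X), pq.2) 1)).sum
        fun s a => single ((⟨(pq.1.1.1, x.1), (Finset.mem_Icc.mp x.2).1⟩ : Y X), s) a

/-- `(τ ⊗ D) ∘ (D ⊗ Δ)` where `τ := (ε ⊗ D) ∘ r`. -/
noncomputable def ndeg2 (r : Inc2 K X →ₗ[K] Inc2 K X) : Inc2 K X →ₗ[K] Inc2 K X :=
  Finsupp.lsum K fun pq => LinearMap.toSpanSingleton K _ <|
    ∑ y ∈ (Finset.Icc pq.2.1.1 pq.2.1.2).attach,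
      ((lcu ∘ₗ r) (single (pq.1, (⟨(pq.2.1.1, y.1), (Finset.mem_Icc.mp y.2).1⟩ : Y X)) 1)).sum
        fun s a => single (s, (⟨(y.1, pq.2.1.2), (Finset.mem_Icc.mp y.2).2⟩ : Y X)) a

/-- `r` is non-degenerate. -/
def NonDeg (r : Inc2 K X →ₗ[K] Inc2 K X) : Prop :=
  Function.Bijective ⇑(ndeg1 r) ∧ Function.Bijective ⇑(ndeg2 r)

/-- The set-map `r₀(a,c) = (ᵃc, aᶜ)` built from left translations `lt` (so
`ᵃc = lt a c`) and right translations `rt` (so `aᶜ = rt a c`). -/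
def r0map (lt rt : X → X → X) : X × X → X × X := fun p => (lt p.1 p.2, rt p.1 p.2)

/-- The set-map `r₀` is non-degenerate. -/
def NonDeg0 (lt rt : X → X → X) : Prop :=
  (∀ a : X, Function.Bijective (lt a)) ∧ (∀ c : X, Function.Bijective (fun a => rt a c))

def m12 (f : X × X → X × X) : X × X × X → X × X × X :=
  fun t => ((f (t.1, t.2.1)).1, (f (t.1, t.2.1)).2, t.2.2)

def m23 (f : X × X → X × X) : X × X × X → X × X × X := fun t => (t.1, f t.2)

/-- `f : X × X → X × X` is a set-theoretic solution of the braid equation. -/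
def Braid0 (f : X × X → X × X) : Prop :=
  m12 f ∘ m23 f ∘ m12 f = m23 f ∘ m12 f ∘ m23 f

/-- `r` induces `r₀` on `X × X`. -/
def Induces (r : Inc2 K X →ₗ[K] Inc2 K X) (lt rt : X → X → X) : Prop :=
  ∀ a c : X,
    r (single (⟨(a, a), le_refl a⟩, ⟨(c, c), le_refl c⟩) 1)
      = single (⟨(lt a c, lt a c), le_refl _⟩, ⟨(rt a c, rt a c), le_refl _⟩) 1

/-- `r ⊗ id` acting on `D ⊗ D ⊗ D`. -/
noncomputable def r12 (r : Inc2 K X →ₗ[K] Inc2 K X) : Inc3 K X →ₗ[K] Inc3 K X :=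
  Finsupp.lsum K fun t => LinearMap.toSpanSingleton K _ <|
    (r (single (t.1, t.2.1) 1)).sum fun p a => single (p.1, p.2, t.2.2) a

/-- `id ⊗ r` acting on `D ⊗ D ⊗ D`. -/
noncomputable def r23 (r : Inc2 K X →ₗ[K] Inc2 K X) : Inc3 K X →ₗ[K] Inc3 K X :=
  Finsupp.lsum K fun t => LinearMap.toSpanSingleton K _ <|
    (r (single t.2 1)).sum fun p a => single (t.1, p) a

/-- The braid equation `r₁₂ ∘ r₂₃ ∘ r₁₂ = r₂₃ ∘ r₁₂ ∘ r₂₃` on `D ⊗ D ⊗ D`. -/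
def BraidEqR (r : Inc2 K X →ₗ[K] Inc2 K X) : Prop :=
  r12 r ∘ₗ r23 r ∘ₗ r12 r = r23 r ∘ₗ r12 r ∘ₗ r23 r

/-- The height of the interval `[a,b]`: the length of its longest chain. -/
noncomputable def hgt (a b : X) : ℕ∞ := Set.chainHeight (Set.Icc a b) (· < ·) - 1

/-- `LBE(S,T)` for `T = [a,b]×[c,d]×[e,f] ⊇ S = [g,h]×[i,j]×[k,l]`. -/
noncomputable def LBE (r : Inc2 K X →ₗ[K] Inc2 K X) (lt rt : X → X → X)
    (a b c d e f g h i j k l : X) : K :=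
  ∑ x ∈ Finset.Icc a g, ∑ y ∈ Finset.Icc h b, ∑ w ∈ Finset.Icc c i,
  ∑ z ∈ Finset.Icc j d, ∑ u ∈ Finset.Icc e k, ∑ v ∈ Finset.Icc l f,
    lam r a b c d (lt a w) (lt a z) (rt x c) (rt y c) *
    lam r (rt x c) (rt y c) e f (lt (rt x c) u) (lt (rt x c) v)
      (rt (rt g c) e) (rt (rt h c) e) *
    lam r (lt a w) (lt a z) (lt (rt x c) u) (lt (rt x c) v)
      (lt a (lt c k)) (lt a (lt c l))
      (rt (lt a i) (lt (rt a i) e)) (rt (lt a j) (lt (rt a j) e))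

/-- `RBE(S,T)` for `T = [a,b]×[c,d]×[e,f] ⊇ S = [g,h]×[i,j]×[k,l]`. -/
noncomputable def RBE (r : Inc2 K X →ₗ[K] Inc2 K X) (lt rt : X → X → X)
    (a b c d e f g h i j k l : X) : K :=
  ∑ x ∈ Finset.Icc a g, ∑ y ∈ Finset.Icc h b, ∑ w ∈ Finset.Icc c i,
  ∑ z ∈ Finset.Icc j d, ∑ u ∈ Finset.Icc e k, ∑ v ∈ Finset.Icc l f,
    lam r c d e f (lt c u) (lt c v) (rt w e) (rt z e) *
    lam r a b (lt c u) (lt c v) (lt a (lt c k)) (lt a (lt c l))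
      (rt x (lt c u)) (rt y (lt c u)) *
    lam r (rt x (lt c u)) (rt y (lt c u)) (rt w e) (rt z e)
      (lt (rt a (lt i e)) (rt i e)) (lt (rt a (lt j e)) (rt j e))
      (rt (rt g c) e) (rt (rt h c) e)

/-- the height of `T = [a,b]×[c,d]×[e,f]`. -/
noncomputable def hgt3 (a b c d e f : X) : ℕ∞ := hgt a b + hgt c d + hgt e f

/-- `LSQ(S,T)` for `T = [a,b]×[c,d] ⊇ S = [e,f]×[g,h]`. -/
noncomputable def LSQ (r : Inc2 K X →ₗ[K] Inc2 K X) (lt rt : X → X → X)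
    (a b c d e f g h : X) : K :=
  ∑ x ∈ Finset.Icc a e, ∑ y ∈ Finset.Icc f b, ∑ w ∈ Finset.Icc c g, ∑ z ∈ Finset.Icc h d,
    lam r a b c d (lt a w) (lt a z) (rt x c) (rt y c) *
    lam r (lt a w) (lt a z) (rt x c) (rt y c)
      (lt (lt a w) (rt e c)) (lt (lt a w) (rt f c))
      (rt (lt a g) (rt x c)) (rt (lt a h) (rt x c))

/-- `RSQ(S,T)` for `T = [a,b]×[c,d] ⊇ S = [e,f]×[g,h]`. -/
def RSQ (K : Type) [Field K] (a b c d e f g h : X) : K :=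
  (if a = e then (1 : K) else 0) * (if b = f then 1 else 0) *
  (if c = g then 1 else 0) * (if d = h then 1 else 0)

/-- the height of `T = [a,b]×[c,d]`. -/
noncomputable def hgt2 (a b c d : X) : ℕ∞ := hgt a b + hgt c d

/-- `r` has set-type square. -/
def SetSq (r : Inc2 K X →ₗ[K] Inc2 K X) (lt rt : X → X → X) : Prop :=
  ∀ (a b c d : X) (hab : a ≤ b) (hcd : c ≤ d)
    (h1 : lt (lt a c) (rt a c) ≤ lt (lt a c) (rt b c))
    (h2 : rt (lt a c) (rt a c) ≤ rt (lt a d) (rt a c)),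
    r (r (single (⟨(a, b), hab⟩, ⟨(c, d), hcd⟩) 1))
      = single (⟨(lt (lt a c) (rt a c), lt (lt a c) (rt b c)), h1⟩,
                ⟨(rt (lt a c) (rt a c), rt (lt a d) (rt a c)), h2⟩) 1

/-- `r` has set-type square up to height 1. -/
def SetSq1 (r : Inc2 K X →ₗ[K] Inc2 K X) (lt rt : X → X → X) : Prop :=
  ∀ (a b c d : X) (hab : a ≤ b) (hcd : c ≤ d), hgt a b + hgt c d = 1 →
    ∀ (h1 : lt (lt a c) (rt a c) ≤ lt (lt a c) (rt b c))
      (h2 : rt (lt a c) (rt a c) ≤ rt (lt a d) (rt a c)),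
    r (r (single (⟨(a, b), hab⟩, ⟨(c, d), hcd⟩) 1))
      = single (⟨(lt (lt a c) (rt a c), lt (lt a c) (rt b c)), h1⟩,
                ⟨(rt (lt a c) (rt a c), rt (lt a d) (rt a c)), h2⟩) 1

/-- `α_r(c)(a,b)` (for translations given by poset automorphisms `φl`, `φr`). -/
noncomputable def alphaR (r : Inc2 K X →ₗ[K] Inc2 K X) (φl φr : X → X) (c a b : X) : K :=
  lam r a b c c (φl c) (φl c) (φr a) (φr b)

/-- `β_r(c)(a,b)`. -/
noncomputable def betaR (r : Inc2 K X →ₗ[K] Inc2 K X) (φl φr : X → X) (c a b : X) : K :=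
  lam r a b c c (φl c) (φl c) (φr a) (φr a)

/-- `α_l(c)(a,b)`. -/
noncomputable def alphaL (r : Inc2 K X →ₗ[K] Inc2 K X) (φl φr : X → X) (c a b : X) : K :=
  lam r c c a b (φl a) (φl b) (φr c) (φr c)

/-- `β_l(c)(a,b)`. -/
noncomputable def betaL (r : Inc2 K X →ₗ[K] Inc2 K X) (φl φr : X → X) (c a b : X) : K :=
  lam r c c a b (φl a) (φl a) (φr c) (φr c)

/-- `Γ_{a|b|c|d}`. -/
noncomputable def Gam (r : Inc2 K X →ₗ[K] Inc2 K X) (φl φr : X → X) (a b c d : X) : K :=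
  lam r a b c d (φl c) (φl c) (φr a) (φr a)

/-- `X` is connected. -/
def Connected (X : Type) [PartialOrder X] : Prop :=
  ∀ x y : X, Relation.ReflTransGen (fun a b : X => a ≤ b ∨ b ≤ a) x y


/-! ### The family of examples: `X = {a₀,…,a_{u−1}, b₀,…,b_{v−1}}` with `aᵢ < bⱼ` -/

/-- The underlying set of the height-one poset of the family of examples. -/
def Xf (u v : ℕ) : Type := Fin u ⊕ Fin v

instance (u v : ℕ) : DecidableEq (Xf u v) :=
  inferInstanceAs (DecidableEq (Fin u ⊕ Fin v))

instance (u v : ℕ) : Fintype (Xf u v) :=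
  inferInstanceAs (Fintype (Fin u ⊕ Fin v))

instance (u v : ℕ) : PartialOrder (Xf u v) where
  le x y := x = y ∨ (x.isLeft = true ∧ y.isRight = true)
  le_refl x := Or.inl rfl
  le_trans x y z hxy hyz := by
    rcases hxy with rfl | ⟨hx, hy⟩
    · exact hyz
    · rcases hyz with rfl | ⟨hy', hz⟩
      · exact Or.inr ⟨hx, hy⟩
      · cases y <;> simp_all
  le_antisymm x y hxy hyx := by
    rcases hxy with rfl | ⟨hx, hy⟩
    · rfl
    · rcases hyx with h | ⟨hy', hx'⟩
      · exact h.symm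
      · cases x <;> simp_all

instance (u v : ℕ) : @DecidableRel (Xf u v) (Xf u v) (· ≤ ·) := fun x y =>
  inferInstanceAs (Decidable (x = y ∨ (x.isLeft = true ∧ y.isRight = true)))

instance (u v : ℕ) : @DecidableRel (Xf u v) (Xf u v) (· < ·) := fun x y =>
  decidable_of_iff (x ≤ y ∧ ¬y ≤ x) lt_iff_le_not_ge.symm

instance (u v : ℕ) : LocallyFiniteOrder (Xf u v) := Fintype.toLocallyFiniteOrder

/-- The minimal elements `a_i`. -/
def Af {u v : ℕ} (i : Fin u) : Xf u v := Sum.inl i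

/-- The maximal elements `b_j`. -/
def Bf {u v : ℕ} (j : Fin v) : Xf u v := Sum.inr j

/-- The poset automorphism `φ_l` determined by `σ_a` and `σ_b`. -/
def phiL {u v : ℕ} (σa : Equiv.Perm (Fin u)) (σb : Equiv.Perm (Fin v)) :
    Xf u v → Xf u v := Sum.map σa σb

/-- The poset automorphism `φ_r` determined by `τ_a` and `τ_b`. -/
def phiR {u v : ℕ} (τa : Equiv.Perm (Fin u)) (τb : Equiv.Perm (Fin v)) :
    Xf u v → Xf u v := Sum.map τa τb

/-- A permutation of `Fin n` is an `n`-cycle (full cycle) iff it acts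
transitively. -/
def IsFullCycle {n : ℕ} (ς : Equiv.Perm (Fin n)) : Prop :=
  ∀ i j : Fin n, ∃ m : ℕ, (ς ^ m) i = j

/-- Every element of `K^×` has `n` distinct `n`-th roots. -/
def HasDistinctRoots (K : Type) [Field K] (n : ℕ) : Prop :=
  ∀ k : K, k ≠ 0 → ∃ S : Finset K, S.card = n ∧ ∀ x ∈ S, x ^ n = k


/-! ### Infrastructure -/

section Infra

variable {K : Type} [Field K] {u v : ℕ}

local notation "X'" => Xf u v

-- order lemmas
lemma af_le_af {i k : Fin u} : (Af i : X') ≤ Af k ↔ i = k := by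
  constructor
  · rintro (h | ⟨h1, h2⟩)
    · exact Sum.inl.inj h
    · simp [Af] at h2
  · rintro rfl; exact le_refl _
lemma le_af {x : X'} {k : Fin u} : x ≤ Af k ↔ x = Af k := by
  constructor
  · rintro (h | ⟨h1, h2⟩)
    · exact h
    · simp [Af] at h2
  · rintro rfl; exact le_refl _
lemma bf_le {x : X'} {j : Fin v} : Bf j ≤ x ↔ x = Bf j := by
  constructor
  · rintro (h | ⟨h1, h2⟩)
    · exact h.symm
    · simp [Bf] at h1
  · rintro rfl; exact le_refl _
lemma bf_le_bf {j l : Fin v} : (Bf j : X') ≤ Bf l ↔ j = l := by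
  rw [bf_le]; constructor
  · intro h; exact (Sum.inr.inj h).symm
  · rintro rfl; rfl
lemma af_le_bf {i : Fin u} {j : Fin v} : (Af i : X') ≤ Bf j := Or.inr ⟨rfl, rfl⟩
lemma af_ne_bf {i : Fin u} {j : Fin v} : (Af i : X') ≠ Bf j := Sum.inl_ne_inr
lemma le_bf_cases {x : X'} {j : Fin v} (h : x ≤ Bf j) : (∃ i, x = Af i) ∨ x = Bf j := by
  rcases x with i | l
  · exact Or.inl ⟨i, rfl⟩
  · have h' : (Bf l : X') ≤ Bf j := h
    have h2 : Bf j = (Bf l : X') := bf_le.mp h'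
    exact Or.inr h2.symm

-- Y basis elements
def yA (i : Fin u) : Y X' := ⟨(Af i, Af i), le_refl _⟩
def yB (j : Fin v) : Y X' := ⟨(Bf j, Bf j), le_refl _⟩
def yC (i : Fin u) (j : Fin v) : Y X' := ⟨(Af i, Bf j), af_le_bf⟩

lemma yCases (y : Y X') : (∃ i, y = yA i) ∨ (∃ j, y = yB j) ∨ (∃ i j, y = yC i j) := by
  obtain ⟨⟨x1, x2⟩, h⟩ := y
  rcases x1 with i | j
  · rcases x2 with i' | j'
    · have h' : (Af i : X') ≤ Af i' := h
      have : i = i' := af_le_af.mp h'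
      subst this
      exact Or.inl ⟨i, rfl⟩
    · exact Or.inr (Or.inr ⟨i, j', rfl⟩)
  · have h' : (Bf j : X') ≤ x2 := h
    have : x2 = Bf j := bf_le.mp h'
    subst this
    exact Or.inr (Or.inl ⟨j, rfl⟩)

-- Icc lemmas
lemma Icc_aa (i : Fin u) : Finset.Icc (Af i : X') (Af i) = {Af i} := by
  ext x; simp only [Finset.mem_Icc, Finset.mem_singleton]
  constructor
  · rintro ⟨h1, h2⟩; exact le_af.mp h2
  · rintro rfl; exact ⟨le_refl _, le_refl _⟩
lemma Icc_bb (j : Fin v) : Finset.Icc (Bf j : X') (Bf j) = {Bf j} := by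
  ext x; simp only [Finset.mem_Icc, Finset.mem_singleton]
  constructor
  · rintro ⟨h1, h2⟩; exact bf_le.mp h1
  · rintro rfl; exact ⟨le_refl _, le_refl _⟩
lemma Icc_ab (i : Fin u) (j : Fin v) :
    Finset.Icc (Af i : X') (Bf j) = {Af i, Bf j} := by
  ext x; simp only [Finset.mem_Icc, Finset.mem_insert, Finset.mem_singleton]
  constructor
  · rintro ⟨h1, h2⟩
    rcases le_bf_cases h2 with ⟨s, rfl⟩ | rfl
    · exact Or.inl (le_af.mp h1).symm
    · exact Or.inr rfl
  · rintro (rfl | rfl)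
    · exact ⟨le_refl _, af_le_bf⟩
    · exact ⟨af_le_bf, le_refl _⟩

-- attach sum helpers
lemma sum_attach_singleton {γ M : Type*} [AddCommMonoid M] (s : Finset γ) (a : γ)
    (h : s = {a}) (f : {x // x ∈ s} → M) :
    ∑ x ∈ s.attach, f x = f ⟨a, h ▸ Finset.mem_singleton_self a⟩ := by
  have hattach : s.attach = {(⟨a, h ▸ Finset.mem_singleton_self a⟩ : {x // x ∈ s})} := by
    ext ⟨x, hx⟩
    simp only [Finset.mem_attach, true_iff, Finset.mem_singleton, Subtype.mk.injEq]
    have := hx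
    rw [h] at this
    simpa using this
  rw [hattach, Finset.sum_singleton]

lemma sum_attach_pair {γ M : Type*} [DecidableEq γ] [AddCommMonoid M] (s : Finset γ)
    (a b : γ) (hab : a ≠ b) (h : s = {a, b}) (f : {x // x ∈ s} → M) :
    ∑ x ∈ s.attach, f x
      = f ⟨a, h ▸ Finset.mem_insert_self a {b}⟩
        + f ⟨b, h ▸ Finset.mem_insert_of_mem (Finset.mem_singleton_self b)⟩ := by
  have hattach : s.attach
      = {(⟨a, h ▸ Finset.mem_insert_self a {b}⟩ : {x // x ∈ s}),
         ⟨b, h ▸ Finset.mem_insert_of_mem (Finset.mem_singleton_self b)⟩} := by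
    ext ⟨x, hx⟩
    simp only [Finset.mem_attach, true_iff, Finset.mem_insert, Finset.mem_singleton,
      Subtype.mk.injEq]
    have := hx
    rw [h] at this
    simpa using this
  rw [hattach, Finset.sum_pair (by simp [Subtype.mk.injEq, hab])]

lemma sum_attach_ite_one {γ R : Type*} [DecidableEq γ] [NonAssocSemiring R]
    (s : Finset γ) (a : γ) (ha : a ∈ s) :
    (∑ x ∈ s.attach, if (x : γ) = a then (1 : R) else 0) = 1 := by
  have : ∀ x : {x // x ∈ s}, ((x : γ) = a) = (x = (⟨a, ha⟩ : {x // x ∈ s})) := by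
    intro x; simp [Subtype.ext_iff]
  simp only [this]
  rw [Finset.sum_ite_eq' s.attach]
  simp

end Infra

section Eval

variable {K X : Type} [Field K] [PartialOrder X] [DecidableEq X]
  [@DecidableRel X X (· ≤ ·)] [LocallyFiniteOrder X]

lemma lam_eq (r : Inc2 K X →ₗ[K] Inc2 K X) {a b c d e f g h : X}
    (h1 : a ≤ b) (h2 : c ≤ d) (h3 : e ≤ f) (h4 : g ≤ h) :
    lam r a b c d e f g h
      = (r (single (⟨(a, b), h1⟩, ⟨(c, d), h2⟩) 1)) (⟨(e, f), h3⟩, ⟨(g, h), h4⟩) := by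
  rw [lam, dif_pos h1, dif_pos h2, dif_pos h3, dif_pos h4]

lemma eps2_single (p : Y X × Y X) (c : K) :
    eps2 (single p c) = if p.1.1.1 = p.1.1.2 ∧ p.2.1.1 = p.2.1.2 then c else 0 := by
  rw [eps2, Finsupp.lsum_single]
  split_ifs with h <;> simp

lemma tmap_single_apply (r s : Inc2 K X →ₗ[K] Inc2 K X) (p q : Y X × Y X) (c : K)
    (P Q : Y X × Y X) :
    (tmap r s (single (p, q) c)) (P, Q)
      = c * ((r (single p 1)) P * (s (single q 1)) Q) := by
  classical
  rw [tmap, Finsupp.lsum_single, LinearMap.toSpanSingleton_apply, Finsupp.smul_apply,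
    smul_eq_mul]
  congr 1
  rw [Finsupp.sum_apply]
  have step1 : ((r (single p 1)).sum fun p' a =>
        ((s (single q 1)).sum fun q' b => (single (p', q') (a * b) : Inc4 K X)) (P, Q))
      = (r (single p 1)).sum fun p' a => if p' = P then a * (s (single q 1)) Q else 0 := by
    apply Finsupp.sum_congr
    intro p' _
    rw [Finsupp.sum_apply]
    by_cases hp : p' = P
    · rw [if_pos hp]
      subst hp
      have hterm : ∀ (q' : Y X × Y X) (b : K),
          (single (p', q') ((r (single p 1)) p' * b) : Inc4 K X) (p', Q)
            = if q' = Q then (r (single p 1)) p' * b else 0 := by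
        intro q' b
        rw [Finsupp.single_apply]
        by_cases hq : q' = Q
        · rw [if_pos hq, if_pos (by rw [hq])]
        · rw [if_neg hq, if_neg (by simp [Prod.ext_iff, hq])]
      simp only [hterm]
      rw [Finsupp.sum_ite_eq']
      split_ifs with hmem
      · rfl
      · rw [Finsupp.notMem_support_iff.mp hmem, mul_zero]
    · rw [if_neg hp]
      have hterm : ∀ (q' : Y X × Y X) (b : K),
          (single (p', q') ((r (single p 1)) p' * b) : Inc4 K X) (P, Q) = 0 := by
        intro q' b
        rw [Finsupp.single_apply, if_neg (by simp [Prod.ext_iff, hp])]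
      simp only [hterm]
      exact Finset.sum_const_zero
  rw [step1, Finsupp.sum_ite_eq']
  split_ifs with hmem
  · rfl
  · rw [Finsupp.notMem_support_iff.mp hmem, zero_mul]

end Eval

section Master

set_option linter.unusedSectionVars false

variable {K X : Type} [Field K] [PartialOrder X] [DecidableEq X]
  [@DecidableRel X X (· ≤ ·)] [LocallyFiniteOrder X]

lemma comul2_apply_point (w : Inc2 K X) {e1 e2 e3 g1 g2 g3 : X}
    (h12 : e1 ≤ e2) (h23 : e2 ≤ e3) (k12 : g1 ≤ g2) (k23 : g2 ≤ g3) :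
    comul2 w ((⟨(e1, e2), h12⟩, ⟨(g1, g2), k12⟩), (⟨(e2, e3), h23⟩, ⟨(g2, g3), k23⟩))
      = w (⟨(e1, e3), h12.trans h23⟩, ⟨(g1, g3), k12.trans k23⟩) := by
  classical
  set idx : (Y X × Y X) × (Y X × Y X) :=
    ((⟨(e1, e2), h12⟩, ⟨(g1, g2), k12⟩), (⟨(e2, e3), h23⟩, ⟨(g2, g3), k23⟩)) with hidx
  set glue : Y X × Y X := (⟨(e1, e3), h12.trans h23⟩, ⟨(g1, g3), k12.trans k23⟩) with hglue
  rw [comul2, Finsupp.lsum_apply]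
  have key : ∀ pq : Y X × Y X,
      ((∑ x ∈ (Finset.Icc pq.1.1.1 pq.1.1.2).attach,
        ∑ y ∈ (Finset.Icc pq.2.1.1 pq.2.1.2).attach,
          (single ((⟨(pq.1.1.1, x.1), (Finset.mem_Icc.mp x.2).1⟩,
                   ⟨(pq.2.1.1, y.1), (Finset.mem_Icc.mp y.2).1⟩),
                  (⟨(x.1, pq.1.1.2), (Finset.mem_Icc.mp x.2).2⟩,
                   ⟨(y.1, pq.2.1.2), (Finset.mem_Icc.mp y.2).2⟩)) (1 : K) : Inc4 K X)) idx)
        = if pq = glue then 1 else 0 := by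
    rintro ⟨⟨⟨a, b⟩, hab⟩, ⟨⟨c, d⟩, hcd⟩⟩
    simp only [Finset.sum_apply']
    by_cases hpq : ((⟨(a, b), hab⟩, ⟨(c, d), hcd⟩) : Y X × Y X) = glue
    · rw [if_pos hpq]
      rw [hglue, Prod.ext_iff, Subtype.ext_iff, Subtype.ext_iff, Prod.ext_iff, Prod.ext_iff]
        at hpq
      obtain ⟨⟨rfl, rfl⟩, ⟨rfl, rfl⟩⟩ := hpq
      have hterm : ∀ (x : {x // x ∈ Finset.Icc a b}) (y : {y // y ∈ Finset.Icc c d}),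
          ((single ((⟨(a, x.1), (Finset.mem_Icc.mp x.2).1⟩,
                   ⟨(c, y.1), (Finset.mem_Icc.mp y.2).1⟩),
                  (⟨(x.1, b), (Finset.mem_Icc.mp x.2).2⟩,
                   ⟨(y.1, d), (Finset.mem_Icc.mp y.2).2⟩)) (1 : K) : Inc4 K X)) idx
            = (if (x : X) = e2 then (1:K) else 0) * (if (y : X) = g2 then (1:K) else 0) := by
        intro x y
        rw [Finsupp.single_apply, hidx]
        by_cases hx : (x : X) = e2
        · by_cases hy : (y : X) = g2
          · rw [if_pos hx, if_pos hy, mul_one, if_pos (by subst hx; subst hy; rfl)]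
          · rw [if_neg (by simp only [Prod.mk.injEq, Subtype.mk.injEq]; tauto), if_neg hy,
              mul_zero]
        · rw [if_neg (by simp only [Prod.mk.injEq, Subtype.mk.injEq]; tauto), if_neg hx,
            zero_mul]
      simp only [hterm]
      rw [← Finset.sum_mul_sum]
      rw [sum_attach_ite_one _ _ (Finset.mem_Icc.mpr ⟨h12, h23⟩),
        sum_attach_ite_one _ _ (Finset.mem_Icc.mpr ⟨k12, k23⟩), one_mul]
    · rw [if_neg hpq]
      apply Finset.sum_eq_zero
      intro x _
      apply Finset.sum_eq_zero
      intro y _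
      rw [Finsupp.single_apply, if_neg]
      intro H
      apply hpq
      simp only [hidx, Prod.mk.injEq, Subtype.mk.injEq] at H
      simp only [hglue, Prod.mk.injEq, Subtype.mk.injEq]
      tauto
  have step1 : ((w.sum fun pq c =>
        (LinearMap.toSpanSingleton K (Inc4 K X)
          (∑ x ∈ (Finset.Icc pq.1.1.1 pq.1.1.2).attach,
        ∑ y ∈ (Finset.Icc pq.2.1.1 pq.2.1.2).attach,
          (single ((⟨(pq.1.1.1, x.1), (Finset.mem_Icc.mp x.2).1⟩,
                   ⟨(pq.2.1.1, y.1), (Finset.mem_Icc.mp y.2).1⟩),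
                  (⟨(x.1, pq.1.1.2), (Finset.mem_Icc.mp x.2).2⟩,
                   ⟨(y.1, pq.2.1.2), (Finset.mem_Icc.mp y.2).2⟩)) (1 : K)))) c) idx)
      = w.sum fun pq c => if pq = glue then c else 0 := by
    rw [Finsupp.sum_apply]
    apply Finsupp.sum_congr
    intro pq _
    rw [LinearMap.toSpanSingleton_apply, Finsupp.smul_apply, smul_eq_mul, key pq]
    split_ifs with h
    · rw [mul_one]
    · rw [mul_zero]
  rw [step1, Finsupp.sum_ite_eq']
  split_ifs with hmem
  · rfl
  · rw [Finsupp.notMem_support_iff.mp hmem]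

end Master

section MasterEq

set_option linter.unusedSectionVars false

variable {K X : Type} [Field K] [PartialOrder X] [DecidableEq X]
  [@DecidableRel X X (· ≤ ·)] [LocallyFiniteOrder X]

lemma master (r : Inc2 K X →ₗ[K] Inc2 K X)
    (hc : comul2 ∘ₗ r = tmap r r ∘ₗ comul2)
    {a b c d : X} (hab : a ≤ b) (hcd : c ≤ d)
    {e1 e2 e3 g1 g2 g3 : X} (h12 : e1 ≤ e2) (h23 : e2 ≤ e3) (k12 : g1 ≤ g2) (k23 : g2 ≤ g3) :
    lam r a b c d e1 e3 g1 g3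
      = ∑ x ∈ (Finset.Icc a b).attach, ∑ y ∈ (Finset.Icc c d).attach,
          lam r a x c y e1 e2 g1 g2 * lam r (x : X) b (y : X) d e2 e3 g2 g3 := by
  classical
  have hmain := congrArg (fun (φ : Inc2 K X →ₗ[K] Inc4 K X) =>
      (φ (single (⟨(a, b), hab⟩, ⟨(c, d), hcd⟩) 1))
        ((⟨(e1, e2), h12⟩, ⟨(g1, g2), k12⟩), (⟨(e2, e3), h23⟩, ⟨(g2, g3), k23⟩))) hc
  simp only [LinearMap.comp_apply] at hmain
  rw [comul2_apply_point _ h12 h23 k12 k23] at hmain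
  rw [lam_eq r hab hcd (h12.trans h23) (k12.trans k23), hmain]
  rw [comul2, Finsupp.lsum_single, LinearMap.toSpanSingleton_apply, one_smul]
  rw [map_sum, Finset.sum_apply']
  apply Finset.sum_congr rfl
  intro x _
  rw [map_sum, Finset.sum_apply']
  apply Finset.sum_congr rfl
  intro y _
  rw [tmap_single_apply, one_mul,
    ← lam_eq r (Finset.mem_Icc.mp x.2).1 (Finset.mem_Icc.mp y.2).1 h12 k12,
    ← lam_eq r (Finset.mem_Icc.mp x.2).2 (Finset.mem_Icc.mp y.2).2 h23 k23]

end MasterEq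

section Derive

set_option linter.unusedSectionVars false
set_option maxHeartbeats 1000000

variable {K : Type} [Field K] {u v : ℕ}
  {σa τa : Equiv.Perm (Fin u)} {σb τb : Equiv.Perm (Fin v)}
  {r : Inc2 K (Xf u v) →ₗ[K] Inc2 K (Xf u v)} {βa βb Γ : K}

@[simp] lemma phiL_af (k : Fin u) : phiL σa σb (Af k) = Af (σa k) := Eq.trans rfl rfl
@[simp] lemma phiL_bf (l : Fin v) : phiL σa σb (Bf l) = Bf (σb l) := Eq.trans rfl rfl
@[simp] lemma phiR_af (k : Fin u) : phiR τa τb (Af k) = Af (τa k) := Eq.trans rfl rfl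
@[simp] lemma phiR_bf (l : Fin v) : phiR τa τb (Bf l) = Bf (τb l) := Eq.trans rfl rfl

@[simp] lemma af_inj {i k : Fin u} : (Af i : Xf u v) = Af k ↔ i = k := by
  constructor
  · intro h; exact Sum.inl.inj h
  · rintro rfl; rfl
@[simp] lemma bf_inj {j l : Fin v} : (Bf j : Xf u v) = Bf l ↔ j = l := by
  constructor
  · intro h; exact Sum.inr.inj h
  · rintro rfl; rfl
@[simp] lemma af_ne_bf' {i : Fin u} {j : Fin v} : ((Af i : Xf u v) = Bf j) ↔ False := by
  simp [Af, Bf]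
@[simp] lemma bf_ne_af' {i : Fin u} {j : Fin v} : ((Bf j : Xf u v) = Af i) ↔ False := by
  simp [Af, Bf]

@[simp] lemma yA_inj {p q : Fin u} : (yA p : Y (Xf u v)) = yA q ↔ p = q := by
  constructor
  · intro h
    have := congrArg (fun z : Y (Xf u v) => z.1.1) h
    have h2 : (Sum.inl p : Fin u ⊕ Fin v) = Sum.inl q := this
    exact Sum.inl.inj h2
  · rintro rfl; rfl
@[simp] lemma yB_inj {p q : Fin v} : (yB p : Y (Xf u v)) = yB q ↔ p = q := by
  constructor
  · intro h
    have := congrArg (fun z : Y (Xf u v) => z.1.1) h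
    have h2 : (Sum.inr p : Fin u ⊕ Fin v) = Sum.inr q := this
    exact Sum.inr.inj h2
  · rintro rfl; rfl
@[simp] lemma yC_inj {p q : Fin u} {s t : Fin v} :
    (yC p s : Y (Xf u v)) = yC q t ↔ p = q ∧ s = t := by
  constructor
  · intro h
    have h1 := congrArg (fun z : Y (Xf u v) => z.1.1) h
    have h2 := congrArg (fun z : Y (Xf u v) => z.1.2) h
    simp only [yC] at h1 h2
    have h1' : (Sum.inl p : Fin u ⊕ Fin v) = Sum.inl q := h1
    have h2' : (Sum.inr s : Fin u ⊕ Fin v) = Sum.inr t := h2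
    exact ⟨Sum.inl.inj h1', Sum.inr.inj h2'⟩
  · rintro ⟨rfl, rfl⟩; rfl
@[simp] lemma yA_ne_yB {p : Fin u} {q : Fin v} : ((yA p : Y (Xf u v)) = yB q) ↔ False := by
  constructor
  · intro h
    have := congrArg (fun z : Y (Xf u v) => z.1.1) h
    simpa [yA, yB] using this
  · exact False.elim
@[simp] lemma yB_ne_yA {p : Fin u} {q : Fin v} : ((yB q : Y (Xf u v)) = yA p) ↔ False := by
  constructor
  · intro h; exact (yA_ne_yB (p := p) (q := q)).mp h.symm
  · exact False.elim
@[simp] lemma yA_ne_yC {p q : Fin u} {t : Fin v} : ((yA p : Y (Xf u v)) = yC q t) ↔ False := by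
  constructor
  · intro h
    have := congrArg (fun z : Y (Xf u v) => z.1.2) h
    simpa [yA, yC] using this
  · exact False.elim
@[simp] lemma yC_ne_yA {p q : Fin u} {t : Fin v} : ((yC q t : Y (Xf u v)) = yA p) ↔ False := by
  constructor
  · intro h; exact (yA_ne_yC (p := p)).mp h.symm
  · exact False.elim
@[simp] lemma yB_ne_yC {p : Fin v} {q : Fin u} {t : Fin v} :
    ((yB p : Y (Xf u v)) = yC q t) ↔ False := by
  constructor
  · intro h
    have := congrArg (fun z : Y (Xf u v) => z.1.1) h
    simpa [yB, yC] using this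
  · exact False.elim
@[simp] lemma yC_ne_yB {p : Fin v} {q : Fin u} {t : Fin v} :
    ((yC q t : Y (Xf u v)) = yB p) ↔ False := by
  constructor
  · intro h; exact (yB_ne_yC (p := p)).mp h.symm
  · exact False.elim

-- attach sums over the concrete intervals
lemma sum_Icc_aa_attach {M : Type*} [AddCommMonoid M] (i : Fin u)
    (f : {x // x ∈ Finset.Icc (Af i : Xf u v) (Af i)} → M) :
    ∑ x ∈ (Finset.Icc (Af i : Xf u v) (Af i)).attach, f x
      = f ⟨Af i, by rw [Icc_aa]; exact Finset.mem_singleton_self _⟩ :=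
  sum_attach_singleton _ _ (Icc_aa i) f
lemma sum_Icc_bb_attach {M : Type*} [AddCommMonoid M] (j : Fin v)
    (f : {x // x ∈ Finset.Icc (Bf j : Xf u v) (Bf j)} → M) :
    ∑ x ∈ (Finset.Icc (Bf j : Xf u v) (Bf j)).attach, f x
      = f ⟨Bf j, by rw [Icc_bb]; exact Finset.mem_singleton_self _⟩ :=
  sum_attach_singleton _ _ (Icc_bb j) f
lemma sum_Icc_ab_attach {M : Type*} [AddCommMonoid M] (i : Fin u) (j : Fin v)
    (f : {x // x ∈ Finset.Icc (Af i : Xf u v) (Bf j)} → M) :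
    ∑ x ∈ (Finset.Icc (Af i : Xf u v) (Bf j)).attach, f x
      = f ⟨Af i, by rw [Icc_ab]; exact Finset.mem_insert_self _ _⟩
        + f ⟨Bf j, by rw [Icc_ab]; exact Finset.mem_insert_of_mem (Finset.mem_singleton_self _)⟩ :=
  sum_attach_pair _ _ _ af_ne_bf (Icc_ab i j) f

-- lam vanishing
lemma lam_zero_ef (r : Inc2 K (Xf u v) →ₗ[K] Inc2 K (Xf u v)) {a b c d e f g h : Xf u v}
    (hne : ¬ e ≤ f) : lam r a b c d e f g h = 0 := by
  rw [lam]
  by_cases h1 : a ≤ b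
  · by_cases h2 : c ≤ d
    · rw [dif_pos h1, dif_pos h2, dif_neg hne]
    · rw [dif_pos h1, dif_neg h2]
  · rw [dif_neg h1]
lemma lam_zero_gh (r : Inc2 K (Xf u v) →ₗ[K] Inc2 K (Xf u v)) {a b c d e f g h : Xf u v}
    (hne : ¬ g ≤ h) : lam r a b c d e f g h = 0 := by
  rw [lam]
  by_cases h1 : a ≤ b
  · by_cases h2 : c ≤ d
    · by_cases h3 : e ≤ f
      · rw [dif_pos h1, dif_pos h2, dif_pos h3, dif_neg hne]
      · rw [dif_pos h1, dif_pos h2, dif_neg h3]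
    · rw [dif_pos h1, dif_neg h2]
  · rw [dif_neg h1]

-- group-like coefficients
lemma lamG (hind : Induces r (fun _ y => phiL σa σb y) (fun x _ => phiR τa τb x))
    (a c e f g h : Xf u v) :
    lam r a a c c e f g h
      = if e = phiL σa σb c ∧ f = phiL σa σb c ∧ g = phiR τa τb a ∧ h = phiR τa τb a
        then 1 else 0 := by
  by_cases h3 : e ≤ f
  · by_cases h4 : g ≤ h
    · rw [lam_eq r (le_refl a) (le_refl c) h3 h4, hind a c, Finsupp.single_apply]
      refine if_congr ?_ rfl rfl
      constructor
      · intro hk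
        have h1 := congrArg (fun z : Y (Xf u v) × Y (Xf u v) => z.1.1.1) hk
        have h2 := congrArg (fun z : Y (Xf u v) × Y (Xf u v) => z.1.1.2) hk
        have h5 := congrArg (fun z : Y (Xf u v) × Y (Xf u v) => z.2.1.1) hk
        have h6 := congrArg (fun z : Y (Xf u v) × Y (Xf u v) => z.2.1.2) hk
        exact ⟨h1.symm, h2.symm, h5.symm, h6.symm⟩
      · rintro ⟨rfl, rfl, rfl, rfl⟩; rfl
    · rw [lam_zero_gh r h4, if_neg]
      rintro ⟨-, -, rfl, rfl⟩
      exact h4 (le_refl _)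
  · rw [lam_zero_ef r h3, if_neg]
    rintro ⟨rfl, rfl, -, -⟩
    exact h3 (le_refl _)

-- master specializations
lemma masterCA (hc : comul2 ∘ₗ r = tmap r r ∘ₗ comul2) (k : Fin u) (l : Fin v) (i : Fin u)
    {e1 e2 e3 g1 g2 g3 : Xf u v}
    (h12 : e1 ≤ e2) (h23 : e2 ≤ e3) (k12 : g1 ≤ g2) (k23 : g2 ≤ g3) :
    lam r (Af k) (Bf l) (Af i) (Af i) e1 e3 g1 g3
      = lam r (Af k) (Af k) (Af i) (Af i) e1 e2 g1 g2
          * lam r (Af k) (Bf l) (Af i) (Af i) e2 e3 g2 g3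
        + lam r (Af k) (Bf l) (Af i) (Af i) e1 e2 g1 g2
          * lam r (Bf l) (Bf l) (Af i) (Af i) e2 e3 g2 g3 := by
  rw [master r hc af_le_bf (le_refl (Af i : Xf u v)) h12 h23 k12 k23,
    sum_Icc_ab_attach, sum_Icc_aa_attach, sum_Icc_aa_attach]

lemma masterCB (hc : comul2 ∘ₗ r = tmap r r ∘ₗ comul2) (k : Fin u) (l : Fin v) (j : Fin v)
    {e1 e2 e3 g1 g2 g3 : Xf u v}
    (h12 : e1 ≤ e2) (h23 : e2 ≤ e3) (k12 : g1 ≤ g2) (k23 : g2 ≤ g3) :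
    lam r (Af k) (Bf l) (Bf j) (Bf j) e1 e3 g1 g3
      = lam r (Af k) (Af k) (Bf j) (Bf j) e1 e2 g1 g2
          * lam r (Af k) (Bf l) (Bf j) (Bf j) e2 e3 g2 g3
        + lam r (Af k) (Bf l) (Bf j) (Bf j) e1 e2 g1 g2
          * lam r (Bf l) (Bf l) (Bf j) (Bf j) e2 e3 g2 g3 := by
  rw [master r hc af_le_bf (le_refl (Bf j : Xf u v)) h12 h23 k12 k23,
    sum_Icc_ab_attach, sum_Icc_bb_attach, sum_Icc_bb_attach]

lemma masterAC (hc : comul2 ∘ₗ r = tmap r r ∘ₗ comul2) (i : Fin u) (k : Fin u) (l : Fin v)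
    {e1 e2 e3 g1 g2 g3 : Xf u v}
    (h12 : e1 ≤ e2) (h23 : e2 ≤ e3) (k12 : g1 ≤ g2) (k23 : g2 ≤ g3) :
    lam r (Af i) (Af i) (Af k) (Bf l) e1 e3 g1 g3
      = lam r (Af i) (Af i) (Af k) (Af k) e1 e2 g1 g2
          * lam r (Af i) (Af i) (Af k) (Bf l) e2 e3 g2 g3
        + lam r (Af i) (Af i) (Af k) (Bf l) e1 e2 g1 g2
          * lam r (Af i) (Af i) (Bf l) (Bf l) e2 e3 g2 g3 := by
  rw [master r hc (le_refl (Af i : Xf u v)) af_le_bf h12 h23 k12 k23,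
    sum_Icc_aa_attach, sum_Icc_ab_attach]

lemma masterBC (hc : comul2 ∘ₗ r = tmap r r ∘ₗ comul2) (j : Fin v) (k : Fin u) (l : Fin v)
    {e1 e2 e3 g1 g2 g3 : Xf u v}
    (h12 : e1 ≤ e2) (h23 : e2 ≤ e3) (k12 : g1 ≤ g2) (k23 : g2 ≤ g3) :
    lam r (Bf j) (Bf j) (Af k) (Bf l) e1 e3 g1 g3
      = lam r (Bf j) (Bf j) (Af k) (Af k) e1 e2 g1 g2
          * lam r (Bf j) (Bf j) (Af k) (Bf l) e2 e3 g2 g3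
        + lam r (Bf j) (Bf j) (Af k) (Bf l) e1 e2 g1 g2
          * lam r (Bf j) (Bf j) (Bf l) (Bf l) e2 e3 g2 g3 := by
  rw [master r hc (le_refl (Bf j : Xf u v)) af_le_bf h12 h23 k12 k23,
    sum_Icc_bb_attach, sum_Icc_ab_attach]

lemma masterCC (hc : comul2 ∘ₗ r = tmap r r ∘ₗ comul2) (i : Fin u) (j : Fin v)
    (k : Fin u) (l : Fin v) {e1 e2 e3 g1 g2 g3 : Xf u v}
    (h12 : e1 ≤ e2) (h23 : e2 ≤ e3) (k12 : g1 ≤ g2) (k23 : g2 ≤ g3) :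
    lam r (Af i) (Bf j) (Af k) (Bf l) e1 e3 g1 g3
      = lam r (Af i) (Af i) (Af k) (Af k) e1 e2 g1 g2
          * lam r (Af i) (Bf j) (Af k) (Bf l) e2 e3 g2 g3
        + lam r (Af i) (Af i) (Af k) (Bf l) e1 e2 g1 g2
          * lam r (Af i) (Bf j) (Bf l) (Bf l) e2 e3 g2 g3
        + lam r (Af i) (Bf j) (Af k) (Af k) e1 e2 g1 g2
          * lam r (Bf j) (Bf j) (Af k) (Bf l) e2 e3 g2 g3
        + lam r (Af i) (Bf j) (Af k) (Bf l) e1 e2 g1 g2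
          * lam r (Bf j) (Bf j) (Bf l) (Bf l) e2 e3 g2 g3 := by
  rw [master r hc af_le_bf af_le_bf h12 h23 k12 k23,
    sum_Icc_ab_attach, sum_Icc_ab_attach, sum_Icc_ab_attach]
  ring

end Derive

section Formulas

set_option linter.unusedSectionVars false
set_option maxHeartbeats 1000000

variable {K : Type} [Field K] {u v : ℕ}
  {σa τa : Equiv.Perm (Fin u)} {σb τb : Equiv.Perm (Fin v)}
  {r : Inc2 K (Xf u v) →ₗ[K] Inc2 K (Xf u v)} {βa βb Γ : K}

lemma eq_sum_single_of_support {α : Type*} [DecidableEq α] (w : α →₀ K) (S : Finset α)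
    (hz : ∀ p, p ∉ S → w p = 0) : w = ∑ p ∈ S, single p (w p) := by
  ext q
  rw [Finset.sum_apply']
  by_cases hq : q ∈ S
  · rw [Finset.sum_eq_single_of_mem q hq]
    · rw [Finsupp.single_apply, if_pos rfl]
    · intro p _ hpq
      rw [Finsupp.single_apply, if_neg hpq]
  · rw [Finset.sum_eq_zero, hz q hq]
    intro p hp
    rw [Finsupp.single_apply, if_neg (by rintro rfl; exact hq hp)]

lemma lamCA_zero (hc : comul2 ∘ₗ r = tmap r r ∘ₗ comul2)
    (hind : Induces r (fun _ y => phiL σa σb y) (fun x _ => phiR τa τb x))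
    (k : Fin u) (l : Fin v) (i : Fin u) (e f g h : Xf u v)
    (hne1 : ¬(e = Af (σa i) ∧ f = Af (σa i) ∧ g = Af (τa k) ∧ h = Bf (τb l)))
    (hne2 : ¬(e = Af (σa i) ∧ f = Af (σa i) ∧ g = Af (τa k) ∧ h = Af (τa k)))
    (hne3 : ¬(e = Af (σa i) ∧ f = Af (σa i) ∧ g = Bf (τb l) ∧ h = Bf (τb l))) :
    lam r (Af k) (Bf l) (Af i) (Af i) e f g h = 0 := by
  by_cases hef : e ≤ f
  case neg => exact lam_zero_ef r hef
  by_cases hgh : g ≤ h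
  case neg => exact lam_zero_gh r hgh
  have hm := masterCA hc k l i hef (le_refl f) hgh (le_refl h)
  rw [lamG hind (Af k) (Af i), lamG hind (Bf l) (Af i)] at hm
  simp only [phiL_af, phiR_af, phiR_bf] at hm
  by_cases hC : f = Af (σa i) ∧ h = Bf (τb l)
  · obtain ⟨rfl, rfl⟩ := hC
    have he : e = Af (σa i) := le_af.mp hef
    subst he
    rcases le_bf_cases hgh with ⟨s, rfl⟩ | rfl
    · have hs : ¬ (Af s : Xf u v) = Af (τa k) := fun hEq => hne1 ⟨rfl, rfl, hEq, rfl⟩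
      have hm2 := masterCA (e1 := Af (σa i)) (e2 := Af (σa i)) (e3 := Af (σa i))
        (g1 := Af s) (g2 := Af s) (g3 := Bf (τb l)) hc k l i
        (le_refl _) (le_refl _) (le_refl _) af_le_bf
      rw [lamG hind (Af k) (Af i), lamG hind (Bf l) (Af i)] at hm2
      simp only [phiL_af, phiR_af, phiR_bf] at hm2
      rw [if_neg (fun hh => hs hh.2.2.1), if_neg (fun hh => af_ne_bf hh.2.2.1),
        zero_mul, mul_zero, add_zero] at hm2
      exact hm2
    · exact absurd ⟨rfl, rfl, rfl, rfl⟩ hne3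
  · by_cases hD : e = Af (σa i) ∧ f = Af (σa i) ∧ g = Af (τa k) ∧ h = Af (τa k)
    · exact absurd hD hne2
    · rw [if_neg hD, zero_mul, zero_add,
        if_neg (fun hh => hC ⟨hh.1, hh.2.2.1⟩), mul_zero] at hm
      exact hm

lemma rCA_formula (hc : comul2 ∘ₗ r = tmap r r ∘ₗ comul2)
    (heps : eps2 ∘ₗ r = eps2)
    (hind : Induces r (fun _ y => phiL σa σb y) (fun x _ => phiR τa τb x))
    (k : Fin u) (l : Fin v) (i : Fin u)
    (hv1 : lam r (Af k) (Bf l) (Af i) (Af i)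
        (Af (σa i)) (Af (σa i)) (Af (τa k)) (Bf (τb l)) = 1)
    (hv2 : lam r (Af k) (Bf l) (Af i) (Af i)
        (Af (σa i)) (Af (σa i)) (Af (τa k)) (Af (τa k)) = -βa) :
    r (single (yC k l, yA i) 1)
      = single ((yA (σa i) : Y (Xf u v)), (yC (τa k) (τb l) : Y (Xf u v))) 1
        + single ((yA (σa i) : Y (Xf u v)), (yA (τa k) : Y (Xf u v))) (-βa)
        + single ((yA (σa i) : Y (Xf u v)), (yB (τb l) : Y (Xf u v))) βa := by
  classical
  set w := r (single (yC k l, yA i) 1) with hw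
  set K1 : Y (Xf u v) × Y (Xf u v) := (yA (σa i), yC (τa k) (τb l)) with hK1
  set K2 : Y (Xf u v) × Y (Xf u v) := (yA (σa i), yA (τa k)) with hK2
  set K3 : Y (Xf u v) × Y (Xf u v) := (yA (σa i), yB (τb l)) with hK3
  have hzero : ∀ pt : Y (Xf u v) × Y (Xf u v), pt ∉ ({K1, K2, K3} : Finset _) → w pt = 0 := by
    rintro ⟨⟨⟨e, f⟩, hef⟩, ⟨⟨g, h⟩, hgh⟩⟩ hmem
    simp only [Finset.mem_insert, Finset.mem_singleton, not_or] at hmem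
    obtain ⟨hne1, hne2, hne3⟩ := hmem
    have hl : w (⟨(e, f), hef⟩, ⟨(g, h), hgh⟩)
        = lam r (Af k) (Bf l) (Af i) (Af i) e f g h :=
      (lam_eq r af_le_bf (le_refl _) hef hgh).symm
    rw [hl]
    apply lamCA_zero hc hind k l i e f g h
    · rintro ⟨rfl, rfl, rfl, rfl⟩; exact hne1 rfl
    · rintro ⟨rfl, rfl, rfl, rfl⟩; exact hne2 rfl
    · rintro ⟨rfl, rfl, rfl, rfl⟩; exact hne3 rfl
  have hpart := eq_sum_single_of_support w {K1, K2, K3} hzero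
  rw [Finset.sum_insert (by simp [hK1, hK2, hK3, Prod.ext_iff]),
    Finset.sum_insert (by simp [hK2, hK3, Prod.ext_iff]),
    Finset.sum_singleton] at hpart
  have hval1 : w K1 = 1 := by
    have hl : w K1 = lam r (Af k) (Bf l) (Af i) (Af i)
        (Af (σa i)) (Af (σa i)) (Af (τa k)) (Bf (τb l)) :=
      (lam_eq r af_le_bf (le_refl _) (le_refl _) af_le_bf).symm
    rw [hl, hv1]
  have hval2 : w K2 = -βa := by
    have hl : w K2 = lam r (Af k) (Bf l) (Af i) (Af i)
        (Af (σa i)) (Af (σa i)) (Af (τa k)) (Af (τa k)) :=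
      (lam_eq r af_le_bf (le_refl _) (le_refl _) (le_refl _)).symm
    rw [hl, hv2]
  have hval3 : w K3 = βa := by
    have hepsw : eps2 w = 0 := by
      have hcg := congrArg
        (fun (ψ : Inc2 K (Xf u v) →ₗ[K] K) => ψ (single (yC k l, yA i) 1)) heps
      simp only [LinearMap.comp_apply] at hcg
      rw [← hw] at hcg
      rw [hcg, eps2_single, if_neg]
      rintro ⟨h1, -⟩
      exact af_ne_bf h1
    rw [hpart] at hepsw
    simp only [map_add, eps2_single, hK1, hK2, hK3] at hepsw
    rw [if_neg (fun hh => af_ne_bf hh.2), if_pos ⟨rfl, rfl⟩, if_pos ⟨rfl, rfl⟩,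
      hval2] at hepsw
    rw [hK3]
    linear_combination hepsw
  rw [hpart, hval1, hval2, hval3]
  abel

end Formulas

section Formulas2

set_option linter.unusedSectionVars false
set_option maxHeartbeats 1000000

variable {K : Type} [Field K] {u v : ℕ}
  {σa τa : Equiv.Perm (Fin u)} {σb τb : Equiv.Perm (Fin v)}
  {r : Inc2 K (Xf u v) →ₗ[K] Inc2 K (Xf u v)} {βa βb Γ : K}

lemma lamCB_zero (hc : comul2 ∘ₗ r = tmap r r ∘ₗ comul2)
    (hind : Induces r (fun _ y => phiL σa σb y) (fun x _ => phiR τa τb x))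
    (k : Fin u) (l : Fin v) (j : Fin v) (e f g h : Xf u v)
    (hne1 : ¬(e = Bf (σb j) ∧ f = Bf (σb j) ∧ g = Af (τa k) ∧ h = Bf (τb l)))
    (hne2 : ¬(e = Bf (σb j) ∧ f = Bf (σb j) ∧ g = Af (τa k) ∧ h = Af (τa k)))
    (hne3 : ¬(e = Bf (σb j) ∧ f = Bf (σb j) ∧ g = Bf (τb l) ∧ h = Bf (τb l))) :
    lam r (Af k) (Bf l) (Bf j) (Bf j) e f g h = 0 := by
  by_cases hef : e ≤ f
  case neg => exact lam_zero_ef r hef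
  by_cases hgh : g ≤ h
  case neg => exact lam_zero_gh r hgh
  have hm := masterCB hc k l j hef (le_refl f) hgh (le_refl h)
  rw [lamG hind (Af k) (Bf j), lamG hind (Bf l) (Bf j)] at hm
  simp only [phiL_bf, phiR_af, phiR_bf] at hm
  by_cases hC : f = Bf (σb j) ∧ h = Bf (τb l)
  · obtain ⟨rfl, rfl⟩ := hC
    rcases le_bf_cases hef with ⟨s, rfl⟩ | rfl
    · -- e = Af s
      have hm2 := masterCB (e1 := Af s) (e2 := Af s) (e3 := Bf (σb j))
        (g1 := g) (g2 := g) (g3 := Bf (τb l)) hc k l j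
        (le_refl _) hef (le_refl _) hgh
      rw [lamG hind (Af k) (Bf j), lamG hind (Bf l) (Bf j)] at hm2
      simp only [phiL_bf, phiR_af, phiR_bf] at hm2
      rw [if_neg (fun hh => af_ne_bf hh.1), if_neg (fun hh => af_ne_bf hh.1),
        zero_mul, mul_zero, add_zero] at hm2
      exact hm2
    · rcases le_bf_cases hgh with ⟨t, rfl⟩ | rfl
      · -- g = Af t
        have ht : ¬ (Af t : Xf u v) = Af (τa k) := fun hEq => hne1 ⟨rfl, rfl, hEq, rfl⟩
        have hm2 := masterCB (e1 := Bf (σb j)) (e2 := Bf (σb j)) (e3 := Bf (σb j))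
          (g1 := Af t) (g2 := Af t) (g3 := Bf (τb l)) hc k l j
          (le_refl _) (le_refl _) (le_refl _) af_le_bf
        rw [lamG hind (Af k) (Bf j), lamG hind (Bf l) (Bf j)] at hm2
        simp only [phiL_bf, phiR_af, phiR_bf] at hm2
        rw [if_neg (fun hh => ht hh.2.2.1), if_neg (fun hh => af_ne_bf hh.2.2.1),
          zero_mul, mul_zero, add_zero] at hm2
        exact hm2
      · exact absurd ⟨rfl, rfl, rfl, rfl⟩ hne3
  · by_cases hD : e = Bf (σb j) ∧ f = Bf (σb j) ∧ g = Af (τa k) ∧ h = Af (τa k)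
    · exact absurd hD hne2
    · rw [if_neg hD, zero_mul, zero_add,
        if_neg (fun hh => hC ⟨hh.1, hh.2.2.1⟩), mul_zero] at hm
      exact hm

lemma rCB_formula (hc : comul2 ∘ₗ r = tmap r r ∘ₗ comul2)
    (heps : eps2 ∘ₗ r = eps2)
    (hind : Induces r (fun _ y => phiL σa σb y) (fun x _ => phiR τa τb x))
    (k : Fin u) (l : Fin v) (j : Fin v)
    (hv1 : lam r (Af k) (Bf l) (Bf j) (Bf j)
        (Bf (σb j)) (Bf (σb j)) (Af (τa k)) (Bf (τb l)) = 1)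
    (hv2 : lam r (Af k) (Bf l) (Bf j) (Bf j)
        (Bf (σb j)) (Bf (σb j)) (Af (τa k)) (Af (τa k)) = -βb) :
    r (single (yC k l, yB j) 1)
      = single ((yB (σb j) : Y (Xf u v)), (yC (τa k) (τb l) : Y (Xf u v))) 1
        + single ((yB (σb j) : Y (Xf u v)), (yA (τa k) : Y (Xf u v))) (-βb)
        + single ((yB (σb j) : Y (Xf u v)), (yB (τb l) : Y (Xf u v))) βb := by
  classical
  set w := r (single (yC k l, yB j) 1) with hw
  set K1 : Y (Xf u v) × Y (Xf u v) := (yB (σb j), yC (τa k) (τb l)) with hK1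
  set K2 : Y (Xf u v) × Y (Xf u v) := (yB (σb j), yA (τa k)) with hK2
  set K3 : Y (Xf u v) × Y (Xf u v) := (yB (σb j), yB (τb l)) with hK3
  have hzero : ∀ pt : Y (Xf u v) × Y (Xf u v), pt ∉ ({K1, K2, K3} : Finset _) → w pt = 0 := by
    rintro ⟨⟨⟨e, f⟩, hef⟩, ⟨⟨g, h⟩, hgh⟩⟩ hmem
    simp only [Finset.mem_insert, Finset.mem_singleton, not_or] at hmem
    obtain ⟨hne1, hne2, hne3⟩ := hmem
    have hl : w (⟨(e, f), hef⟩, ⟨(g, h), hgh⟩)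
        = lam r (Af k) (Bf l) (Bf j) (Bf j) e f g h :=
      (lam_eq r af_le_bf (le_refl _) hef hgh).symm
    rw [hl]
    apply lamCB_zero hc hind k l j e f g h
    · rintro ⟨rfl, rfl, rfl, rfl⟩; exact hne1 rfl
    · rintro ⟨rfl, rfl, rfl, rfl⟩; exact hne2 rfl
    · rintro ⟨rfl, rfl, rfl, rfl⟩; exact hne3 rfl
  have hpart := eq_sum_single_of_support w {K1, K2, K3} hzero
  rw [Finset.sum_insert (by simp [hK1, hK2, hK3, Prod.ext_iff]),
    Finset.sum_insert (by simp [hK2, hK3, Prod.ext_iff]),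
    Finset.sum_singleton] at hpart
  have hval1 : w K1 = 1 := by
    have hl : w K1 = lam r (Af k) (Bf l) (Bf j) (Bf j)
        (Bf (σb j)) (Bf (σb j)) (Af (τa k)) (Bf (τb l)) :=
      (lam_eq r af_le_bf (le_refl _) (le_refl _) af_le_bf).symm
    rw [hl, hv1]
  have hval2 : w K2 = -βb := by
    have hl : w K2 = lam r (Af k) (Bf l) (Bf j) (Bf j)
        (Bf (σb j)) (Bf (σb j)) (Af (τa k)) (Af (τa k)) :=
      (lam_eq r af_le_bf (le_refl _) (le_refl _) (le_refl _)).symm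
    rw [hl, hv2]
  have hval3 : w K3 = βb := by
    have hepsw : eps2 w = 0 := by
      have hcg := congrArg
        (fun (ψ : Inc2 K (Xf u v) →ₗ[K] K) => ψ (single (yC k l, yB j) 1)) heps
      simp only [LinearMap.comp_apply] at hcg
      rw [← hw] at hcg
      rw [hcg, eps2_single, if_neg]
      rintro ⟨h1, -⟩
      exact af_ne_bf h1
    rw [hpart] at hepsw
    simp only [map_add, eps2_single, hK1, hK2, hK3] at hepsw
    rw [if_neg (fun hh => af_ne_bf hh.2), if_pos ⟨rfl, rfl⟩, if_pos ⟨rfl, rfl⟩,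
      hval2] at hepsw
    rw [hK3]
    linear_combination hepsw
  rw [hpart, hval1, hval2, hval3]
  abel

lemma lamAC_zero (hc : comul2 ∘ₗ r = tmap r r ∘ₗ comul2)
    (hind : Induces r (fun _ y => phiL σa σb y) (fun x _ => phiR τa τb x))
    (i : Fin u) (k : Fin u) (l : Fin v) (e f g h : Xf u v)
    (hne1 : ¬(e = Af (σa k) ∧ f = Bf (σb l) ∧ g = Af (τa i) ∧ h = Af (τa i)))
    (hne2 : ¬(e = Af (σa k) ∧ f = Af (σa k) ∧ g = Af (τa i) ∧ h = Af (τa i)))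
    (hne3 : ¬(e = Bf (σb l) ∧ f = Bf (σb l) ∧ g = Af (τa i) ∧ h = Af (τa i))) :
    lam r (Af i) (Af i) (Af k) (Bf l) e f g h = 0 := by
  by_cases hef : e ≤ f
  case neg => exact lam_zero_ef r hef
  by_cases hgh : g ≤ h
  case neg => exact lam_zero_gh r hgh
  have hm := masterAC hc i k l hef (le_refl f) hgh (le_refl h)
  rw [lamG hind (Af i) (Af k), lamG hind (Af i) (Bf l)] at hm
  simp only [phiL_af, phiL_bf, phiR_af] at hm
  by_cases hC : f = Bf (σb l) ∧ h = Af (τa i)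
  · obtain ⟨rfl, rfl⟩ := hC
    have hg : g = Af (τa i) := le_af.mp hgh
    subst hg
    rcases le_bf_cases hef with ⟨s, rfl⟩ | rfl
    · have hs : ¬ (Af s : Xf u v) = Af (σa k) := fun hEq => hne1 ⟨hEq, rfl, rfl, rfl⟩
      have hm2 := masterAC (e1 := Af s) (e2 := Af s) (e3 := Bf (σb l))
        (g1 := Af (τa i)) (g2 := Af (τa i)) (g3 := Af (τa i)) hc i k l
        (le_refl _) af_le_bf (le_refl _) (le_refl _)
      rw [lamG hind (Af i) (Af k), lamG hind (Af i) (Bf l)] at hm2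
      simp only [phiL_af, phiL_bf, phiR_af] at hm2
      rw [if_neg (fun hh => hs hh.1), if_neg (fun hh => af_ne_bf hh.1),
        zero_mul, mul_zero, add_zero] at hm2
      exact hm2
    · exact absurd ⟨rfl, rfl, rfl, rfl⟩ hne3
  · by_cases hD : e = Af (σa k) ∧ f = Af (σa k) ∧ g = Af (τa i) ∧ h = Af (τa i)
    · exact absurd hD hne2
    · rw [if_neg hD, zero_mul, zero_add,
        if_neg (fun hh => hC ⟨hh.1, hh.2.2.1⟩), mul_zero] at hm
      exact hm

lemma rAC_formula (hc : comul2 ∘ₗ r = tmap r r ∘ₗ comul2)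
    (heps : eps2 ∘ₗ r = eps2)
    (hind : Induces r (fun _ y => phiL σa σb y) (fun x _ => phiR τa τb x))
    (i : Fin u) (k : Fin u) (l : Fin v)
    (hv1 : lam r (Af i) (Af i) (Af k) (Bf l)
        (Af (σa k)) (Bf (σb l)) (Af (τa i)) (Af (τa i)) = 1)
    (hv2 : lam r (Af i) (Af i) (Af k) (Bf l)
        (Af (σa k)) (Af (σa k)) (Af (τa i)) (Af (τa i)) = βa) :
    r (single (yA i, yC k l) 1)
      = single ((yC (σa k) (σb l) : Y (Xf u v)), (yA (τa i) : Y (Xf u v))) 1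
        + single ((yA (σa k) : Y (Xf u v)), (yA (τa i) : Y (Xf u v))) βa
        + single ((yB (σb l) : Y (Xf u v)), (yA (τa i) : Y (Xf u v))) (-βa) := by
  classical
  set w := r (single (yA i, yC k l) 1) with hw
  set K1 : Y (Xf u v) × Y (Xf u v) := (yC (σa k) (σb l), yA (τa i)) with hK1
  set K2 : Y (Xf u v) × Y (Xf u v) := (yA (σa k), yA (τa i)) with hK2
  set K3 : Y (Xf u v) × Y (Xf u v) := (yB (σb l), yA (τa i)) with hK3
  have hzero : ∀ pt : Y (Xf u v) × Y (Xf u v), pt ∉ ({K1, K2, K3} : Finset _) → w pt = 0 := by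
    rintro ⟨⟨⟨e, f⟩, hef⟩, ⟨⟨g, h⟩, hgh⟩⟩ hmem
    simp only [Finset.mem_insert, Finset.mem_singleton, not_or] at hmem
    obtain ⟨hne1, hne2, hne3⟩ := hmem
    have hl : w (⟨(e, f), hef⟩, ⟨(g, h), hgh⟩)
        = lam r (Af i) (Af i) (Af k) (Bf l) e f g h :=
      (lam_eq r (le_refl _) af_le_bf hef hgh).symm
    rw [hl]
    apply lamAC_zero hc hind i k l e f g h
    · rintro ⟨rfl, rfl, rfl, rfl⟩; exact hne1 rfl
    · rintro ⟨rfl, rfl, rfl, rfl⟩; exact hne2 rfl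
    · rintro ⟨rfl, rfl, rfl, rfl⟩; exact hne3 rfl
  have hpart := eq_sum_single_of_support w {K1, K2, K3} hzero
  rw [Finset.sum_insert (by simp [hK1, hK2, hK3, Prod.ext_iff]),
    Finset.sum_insert (by simp [hK2, hK3, Prod.ext_iff]),
    Finset.sum_singleton] at hpart
  have hval1 : w K1 = 1 := by
    have hl : w K1 = lam r (Af i) (Af i) (Af k) (Bf l)
        (Af (σa k)) (Bf (σb l)) (Af (τa i)) (Af (τa i)) :=
      (lam_eq r (le_refl _) af_le_bf af_le_bf (le_refl _)).symm
    rw [hl, hv1]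
  have hval2 : w K2 = βa := by
    have hl : w K2 = lam r (Af i) (Af i) (Af k) (Bf l)
        (Af (σa k)) (Af (σa k)) (Af (τa i)) (Af (τa i)) :=
      (lam_eq r (le_refl _) af_le_bf (le_refl _) (le_refl _)).symm
    rw [hl, hv2]
  have hval3 : w K3 = -βa := by
    have hepsw : eps2 w = 0 := by
      have hcg := congrArg
        (fun (ψ : Inc2 K (Xf u v) →ₗ[K] K) => ψ (single (yA i, yC k l) 1)) heps
      simp only [LinearMap.comp_apply] at hcg
      rw [← hw] at hcg
      rw [hcg, eps2_single, if_neg]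
      rintro ⟨-, h2⟩
      exact af_ne_bf h2
    rw [hpart] at hepsw
    simp only [map_add, eps2_single, hK1, hK2, hK3] at hepsw
    rw [if_neg (fun hh => af_ne_bf hh.1), if_pos ⟨rfl, rfl⟩, if_pos ⟨rfl, rfl⟩,
      hval2] at hepsw
    rw [hK3]
    linear_combination hepsw
  rw [hpart, hval1, hval2, hval3]
  abel

lemma lamBC_zero (hc : comul2 ∘ₗ r = tmap r r ∘ₗ comul2)
    (hind : Induces r (fun _ y => phiL σa σb y) (fun x _ => phiR τa τb x))
    (j : Fin v) (k : Fin u) (l : Fin v) (e f g h : Xf u v)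
    (hne1 : ¬(e = Af (σa k) ∧ f = Bf (σb l) ∧ g = Bf (τb j) ∧ h = Bf (τb j)))
    (hne2 : ¬(e = Af (σa k) ∧ f = Af (σa k) ∧ g = Bf (τb j) ∧ h = Bf (τb j)))
    (hne3 : ¬(e = Bf (σb l) ∧ f = Bf (σb l) ∧ g = Bf (τb j) ∧ h = Bf (τb j))) :
    lam r (Bf j) (Bf j) (Af k) (Bf l) e f g h = 0 := by
  by_cases hef : e ≤ f
  case neg => exact lam_zero_ef r hef
  by_cases hgh : g ≤ h
  case neg => exact lam_zero_gh r hgh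
  have hm := masterBC hc j k l hef (le_refl f) hgh (le_refl h)
  rw [lamG hind (Bf j) (Af k), lamG hind (Bf j) (Bf l)] at hm
  simp only [phiL_af, phiL_bf, phiR_bf] at hm
  by_cases hC : f = Bf (σb l) ∧ h = Bf (τb j)
  · obtain ⟨rfl, rfl⟩ := hC
    rcases le_bf_cases hgh with ⟨t, rfl⟩ | rfl
    · -- g = Af t : impossible keys; show zero via choice2 on g
      have hm2 := masterBC (e1 := e) (e2 := e) (e3 := Bf (σb l))
        (g1 := Af t) (g2 := Af t) (g3 := Bf (τb j)) hc j k l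
        (le_refl _) hef (le_refl _) af_le_bf
      rw [lamG hind (Bf j) (Af k), lamG hind (Bf j) (Bf l)] at hm2
      simp only [phiL_af, phiL_bf, phiR_bf] at hm2
      rw [if_neg (fun hh => af_ne_bf hh.2.2.1), if_neg (fun hh => af_ne_bf hh.2.2.1),
        zero_mul, mul_zero, add_zero] at hm2
      exact hm2
    · rcases le_bf_cases hef with ⟨s, rfl⟩ | rfl
      · have hs : ¬ (Af s : Xf u v) = Af (σa k) := fun hEq => hne1 ⟨hEq, rfl, rfl, rfl⟩
        have hm2 := masterBC (e1 := Af s) (e2 := Af s) (e3 := Bf (σb l))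
          (g1 := Bf (τb j)) (g2 := Bf (τb j)) (g3 := Bf (τb j)) hc j k l
          (le_refl _) af_le_bf (le_refl _) (le_refl _)
        rw [lamG hind (Bf j) (Af k), lamG hind (Bf j) (Bf l)] at hm2
        simp only [phiL_af, phiL_bf, phiR_bf] at hm2
        rw [if_neg (fun hh => hs hh.1), if_neg (fun hh => af_ne_bf hh.1),
          zero_mul, mul_zero, add_zero] at hm2
        exact hm2
      · exact absurd ⟨rfl, rfl, rfl, rfl⟩ hne3
  · by_cases hD : e = Af (σa k) ∧ f = Af (σa k) ∧ g = Bf (τb j) ∧ h = Bf (τb j)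
    · exact absurd hD hne2
    · rw [if_neg hD, zero_mul, zero_add,
        if_neg (fun hh => hC ⟨hh.1, hh.2.2.1⟩), mul_zero] at hm
      exact hm

lemma rBC_formula (hc : comul2 ∘ₗ r = tmap r r ∘ₗ comul2)
    (heps : eps2 ∘ₗ r = eps2)
    (hind : Induces r (fun _ y => phiL σa σb y) (fun x _ => phiR τa τb x))
    (j : Fin v) (k : Fin u) (l : Fin v)
    (hv1 : lam r (Bf j) (Bf j) (Af k) (Bf l)
        (Af (σa k)) (Bf (σb l)) (Bf (τb j)) (Bf (τb j)) = 1)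
    (hv2 : lam r (Bf j) (Bf j) (Af k) (Bf l)
        (Af (σa k)) (Af (σa k)) (Bf (τb j)) (Bf (τb j)) = βb) :
    r (single (yB j, yC k l) 1)
      = single ((yC (σa k) (σb l) : Y (Xf u v)), (yB (τb j) : Y (Xf u v))) 1
        + single ((yA (σa k) : Y (Xf u v)), (yB (τb j) : Y (Xf u v))) βb
        + single ((yB (σb l) : Y (Xf u v)), (yB (τb j) : Y (Xf u v))) (-βb) := by
  classical
  set w := r (single (yB j, yC k l) 1) with hw
  set K1 : Y (Xf u v) × Y (Xf u v) := (yC (σa k) (σb l), yB (τb j)) with hK1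
  set K2 : Y (Xf u v) × Y (Xf u v) := (yA (σa k), yB (τb j)) with hK2
  set K3 : Y (Xf u v) × Y (Xf u v) := (yB (σb l), yB (τb j)) with hK3
  have hzero : ∀ pt : Y (Xf u v) × Y (Xf u v), pt ∉ ({K1, K2, K3} : Finset _) → w pt = 0 := by
    rintro ⟨⟨⟨e, f⟩, hef⟩, ⟨⟨g, h⟩, hgh⟩⟩ hmem
    simp only [Finset.mem_insert, Finset.mem_singleton, not_or] at hmem
    obtain ⟨hne1, hne2, hne3⟩ := hmem
    have hl : w (⟨(e, f), hef⟩, ⟨(g, h), hgh⟩)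
        = lam r (Bf j) (Bf j) (Af k) (Bf l) e f g h :=
      (lam_eq r (le_refl _) af_le_bf hef hgh).symm
    rw [hl]
    apply lamBC_zero hc hind j k l e f g h
    · rintro ⟨rfl, rfl, rfl, rfl⟩; exact hne1 rfl
    · rintro ⟨rfl, rfl, rfl, rfl⟩; exact hne2 rfl
    · rintro ⟨rfl, rfl, rfl, rfl⟩; exact hne3 rfl
  have hpart := eq_sum_single_of_support w {K1, K2, K3} hzero
  rw [Finset.sum_insert (by simp [hK1, hK2, hK3, Prod.ext_iff]),
    Finset.sum_insert (by simp [hK2, hK3, Prod.ext_iff]),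
    Finset.sum_singleton] at hpart
  have hval1 : w K1 = 1 := by
    have hl : w K1 = lam r (Bf j) (Bf j) (Af k) (Bf l)
        (Af (σa k)) (Bf (σb l)) (Bf (τb j)) (Bf (τb j)) :=
      (lam_eq r (le_refl _) af_le_bf af_le_bf (le_refl _)).symm
    rw [hl, hv1]
  have hval2 : w K2 = βb := by
    have hl : w K2 = lam r (Bf j) (Bf j) (Af k) (Bf l)
        (Af (σa k)) (Af (σa k)) (Bf (τb j)) (Bf (τb j)) :=
      (lam_eq r (le_refl _) af_le_bf (le_refl _) (le_refl _)).symm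
    rw [hl, hv2]
  have hval3 : w K3 = -βb := by
    have hepsw : eps2 w = 0 := by
      have hcg := congrArg
        (fun (ψ : Inc2 K (Xf u v) →ₗ[K] K) => ψ (single (yB j, yC k l) 1)) heps
      simp only [LinearMap.comp_apply] at hcg
      rw [← hw] at hcg
      rw [hcg, eps2_single, if_neg]
      rintro ⟨-, h2⟩
      exact af_ne_bf h2
    rw [hpart] at hepsw
    simp only [map_add, eps2_single, hK1, hK2, hK3] at hepsw
    rw [if_neg (fun hh => af_ne_bf hh.1), if_pos ⟨rfl, rfl⟩, if_pos ⟨rfl, rfl⟩,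
      hval2] at hepsw
    rw [hK3]
    linear_combination hepsw
  rw [hpart, hval1, hval2, hval3]
  abel

end Formulas2

section Closed

set_option linter.unusedSectionVars false
set_option maxHeartbeats 1000000

variable {K : Type} [Field K] {u v : ℕ}
  {σa τa : Equiv.Perm (Fin u)} {σb τb : Equiv.Perm (Fin v)}
  {r : Inc2 K (Xf u v) →ₗ[K] Inc2 K (Xf u v)} {βa βb Γ : K}

@[simp] lemma yA_eq_mk {p : Fin u} {e f : Xf u v} {hef : e ≤ f} :
    (yA p = (⟨(e, f), hef⟩ : Y (Xf u v))) ↔ (e = Af p ∧ f = Af p) := by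
  rw [Subtype.ext_iff, Prod.ext_iff]
  constructor
  · rintro ⟨h1, h2⟩; exact ⟨h1.symm, h2.symm⟩
  · rintro ⟨rfl, rfl⟩; exact ⟨rfl, rfl⟩
@[simp] lemma yB_eq_mk {p : Fin v} {e f : Xf u v} {hef : e ≤ f} :
    (yB p = (⟨(e, f), hef⟩ : Y (Xf u v))) ↔ (e = Bf p ∧ f = Bf p) := by
  rw [Subtype.ext_iff, Prod.ext_iff]
  constructor
  · rintro ⟨h1, h2⟩; exact ⟨h1.symm, h2.symm⟩
  · rintro ⟨rfl, rfl⟩; exact ⟨rfl, rfl⟩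
@[simp] lemma yC_eq_mk {p : Fin u} {q : Fin v} {e f : Xf u v} {hef : e ≤ f} :
    (yC p q = (⟨(e, f), hef⟩ : Y (Xf u v))) ↔ (e = Af p ∧ f = Bf q) := by
  rw [Subtype.ext_iff, Prod.ext_iff]
  constructor
  · rintro ⟨h1, h2⟩; exact ⟨h1.symm, h2.symm⟩
  · rintro ⟨rfl, rfl⟩; exact ⟨rfl, rfl⟩

lemma lamCA_closed (hc : comul2 ∘ₗ r = tmap r r ∘ₗ comul2)
    (heps : eps2 ∘ₗ r = eps2)
    (hind : Induces r (fun _ y => phiL σa σb y) (fun x _ => phiR τa τb x))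
    (k : Fin u) (l : Fin v) (i : Fin u)
    (hv1 : lam r (Af k) (Bf l) (Af i) (Af i)
        (Af (σa i)) (Af (σa i)) (Af (τa k)) (Bf (τb l)) = 1)
    (hv2 : lam r (Af k) (Bf l) (Af i) (Af i)
        (Af (σa i)) (Af (σa i)) (Af (τa k)) (Af (τa k)) = -βa)
    (e f g h : Xf u v) :
    lam r (Af k) (Bf l) (Af i) (Af i) e f g h
      = (if e = Af (σa i) ∧ f = Af (σa i) ∧ g = Af (τa k) ∧ h = Bf (τb l) then 1 else 0)
        + (if e = Af (σa i) ∧ f = Af (σa i) ∧ g = Af (τa k) ∧ h = Af (τa k) then -βa else 0)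
        + (if e = Af (σa i) ∧ f = Af (σa i) ∧ g = Bf (τb l) ∧ h = Bf (τb l) then βa else 0) := by
  by_cases hef : e ≤ f
  · by_cases hgh : g ≤ h
    · rw [lam_eq r af_le_bf (le_refl _) hef hgh,
        show ((⟨(Af k, Bf l), af_le_bf⟩ : Y (Xf u v)),
          (⟨(Af i, Af i), le_refl (Af i : Xf u v)⟩ : Y (Xf u v)))
          = ((yC k l : Y (Xf u v)), (yA i : Y (Xf u v))) from rfl,
        rCA_formula hc heps hind k l i hv1 hv2]
      simp only [Finsupp.add_apply, Finsupp.single_apply, Prod.mk.injEq,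
        yA_eq_mk, yB_eq_mk, yC_eq_mk, and_assoc]
    · have z1 : ¬(e = Af (σa i) ∧ f = Af (σa i) ∧ g = Af (τa k) ∧ h = Bf (τb l)) := by
        rintro ⟨-, -, rfl, rfl⟩; exact hgh af_le_bf
      have z2 : ¬(e = Af (σa i) ∧ f = Af (σa i) ∧ g = Af (τa k) ∧ h = Af (τa k)) := by
        rintro ⟨-, -, rfl, rfl⟩; exact hgh (le_refl _)
      have z3 : ¬(e = Af (σa i) ∧ f = Af (σa i) ∧ g = Bf (τb l) ∧ h = Bf (τb l)) := by
        rintro ⟨-, -, rfl, rfl⟩; exact hgh (le_refl _)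
      rw [lam_zero_gh r hgh, if_neg z1, if_neg z2, if_neg z3]
      norm_num
  · have z1 : ¬(e = Af (σa i) ∧ f = Af (σa i) ∧ g = Af (τa k) ∧ h = Bf (τb l)) := by
      rintro ⟨rfl, rfl, -, -⟩; exact hef (le_refl _)
    have z2 : ¬(e = Af (σa i) ∧ f = Af (σa i) ∧ g = Af (τa k) ∧ h = Af (τa k)) := by
      rintro ⟨rfl, rfl, -, -⟩; exact hef (le_refl _)
    have z3 : ¬(e = Af (σa i) ∧ f = Af (σa i) ∧ g = Bf (τb l) ∧ h = Bf (τb l)) := by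
      rintro ⟨rfl, rfl, -, -⟩; exact hef (le_refl _)
    rw [lam_zero_ef r hef, if_neg z1, if_neg z2, if_neg z3]
    norm_num

lemma lamCB_closed (hc : comul2 ∘ₗ r = tmap r r ∘ₗ comul2)
    (heps : eps2 ∘ₗ r = eps2)
    (hind : Induces r (fun _ y => phiL σa σb y) (fun x _ => phiR τa τb x))
    (k : Fin u) (l : Fin v) (j : Fin v)
    (hv1 : lam r (Af k) (Bf l) (Bf j) (Bf j)
        (Bf (σb j)) (Bf (σb j)) (Af (τa k)) (Bf (τb l)) = 1)
    (hv2 : lam r (Af k) (Bf l) (Bf j) (Bf j)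
        (Bf (σb j)) (Bf (σb j)) (Af (τa k)) (Af (τa k)) = -βb)
    (e f g h : Xf u v) :
    lam r (Af k) (Bf l) (Bf j) (Bf j) e f g h
      = (if e = Bf (σb j) ∧ f = Bf (σb j) ∧ g = Af (τa k) ∧ h = Bf (τb l) then 1 else 0)
        + (if e = Bf (σb j) ∧ f = Bf (σb j) ∧ g = Af (τa k) ∧ h = Af (τa k) then -βb else 0)
        + (if e = Bf (σb j) ∧ f = Bf (σb j) ∧ g = Bf (τb l) ∧ h = Bf (τb l) then βb else 0) := by
  by_cases hef : e ≤ f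
  · by_cases hgh : g ≤ h
    · rw [lam_eq r af_le_bf (le_refl _) hef hgh,
        show ((⟨(Af k, Bf l), af_le_bf⟩ : Y (Xf u v)),
          (⟨(Bf j, Bf j), le_refl (Bf j : Xf u v)⟩ : Y (Xf u v)))
          = ((yC k l : Y (Xf u v)), (yB j : Y (Xf u v))) from rfl,
        rCB_formula hc heps hind k l j hv1 hv2]
      simp only [Finsupp.add_apply, Finsupp.single_apply, Prod.mk.injEq,
        yA_eq_mk, yB_eq_mk, yC_eq_mk, and_assoc]
    · have z1 : ¬(e = Bf (σb j) ∧ f = Bf (σb j) ∧ g = Af (τa k) ∧ h = Bf (τb l)) := by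
        rintro ⟨-, -, rfl, rfl⟩; exact hgh af_le_bf
      have z2 : ¬(e = Bf (σb j) ∧ f = Bf (σb j) ∧ g = Af (τa k) ∧ h = Af (τa k)) := by
        rintro ⟨-, -, rfl, rfl⟩; exact hgh (le_refl _)
      have z3 : ¬(e = Bf (σb j) ∧ f = Bf (σb j) ∧ g = Bf (τb l) ∧ h = Bf (τb l)) := by
        rintro ⟨-, -, rfl, rfl⟩; exact hgh (le_refl _)
      rw [lam_zero_gh r hgh, if_neg z1, if_neg z2, if_neg z3]
      norm_num
  · have z1 : ¬(e = Bf (σb j) ∧ f = Bf (σb j) ∧ g = Af (τa k) ∧ h = Bf (τb l)) := by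
      rintro ⟨rfl, rfl, -, -⟩; exact hef (le_refl _)
    have z2 : ¬(e = Bf (σb j) ∧ f = Bf (σb j) ∧ g = Af (τa k) ∧ h = Af (τa k)) := by
      rintro ⟨rfl, rfl, -, -⟩; exact hef (le_refl _)
    have z3 : ¬(e = Bf (σb j) ∧ f = Bf (σb j) ∧ g = Bf (τb l) ∧ h = Bf (τb l)) := by
      rintro ⟨rfl, rfl, -, -⟩; exact hef (le_refl _)
    rw [lam_zero_ef r hef, if_neg z1, if_neg z2, if_neg z3]
    norm_num

lemma lamAC_closed (hc : comul2 ∘ₗ r = tmap r r ∘ₗ comul2)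
    (heps : eps2 ∘ₗ r = eps2)
    (hind : Induces r (fun _ y => phiL σa σb y) (fun x _ => phiR τa τb x))
    (i : Fin u) (k : Fin u) (l : Fin v)
    (hv1 : lam r (Af i) (Af i) (Af k) (Bf l)
        (Af (σa k)) (Bf (σb l)) (Af (τa i)) (Af (τa i)) = 1)
    (hv2 : lam r (Af i) (Af i) (Af k) (Bf l)
        (Af (σa k)) (Af (σa k)) (Af (τa i)) (Af (τa i)) = βa)
    (e f g h : Xf u v) :
    lam r (Af i) (Af i) (Af k) (Bf l) e f g h
      = (if e = Af (σa k) ∧ f = Bf (σb l) ∧ g = Af (τa i) ∧ h = Af (τa i) then 1 else 0)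
        + (if e = Af (σa k) ∧ f = Af (σa k) ∧ g = Af (τa i) ∧ h = Af (τa i) then βa else 0)
        + (if e = Bf (σb l) ∧ f = Bf (σb l) ∧ g = Af (τa i) ∧ h = Af (τa i) then -βa else 0) := by
  by_cases hef : e ≤ f
  · by_cases hgh : g ≤ h
    · rw [lam_eq r (le_refl _) af_le_bf hef hgh,
        show ((⟨(Af i, Af i), le_refl (Af i : Xf u v)⟩ : Y (Xf u v)),
          (⟨(Af k, Bf l), af_le_bf⟩ : Y (Xf u v)))
          = ((yA i : Y (Xf u v)), (yC k l : Y (Xf u v))) from rfl,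
        rAC_formula hc heps hind i k l hv1 hv2]
      simp only [Finsupp.add_apply, Finsupp.single_apply, Prod.mk.injEq,
        yA_eq_mk, yB_eq_mk, yC_eq_mk, and_assoc]
    · have z1 : ¬(e = Af (σa k) ∧ f = Bf (σb l) ∧ g = Af (τa i) ∧ h = Af (τa i)) := by
        rintro ⟨-, -, rfl, rfl⟩; exact hgh (le_refl _)
      have z2 : ¬(e = Af (σa k) ∧ f = Af (σa k) ∧ g = Af (τa i) ∧ h = Af (τa i)) := by
        rintro ⟨-, -, rfl, rfl⟩; exact hgh (le_refl _)
      have z3 : ¬(e = Bf (σb l) ∧ f = Bf (σb l) ∧ g = Af (τa i) ∧ h = Af (τa i)) := by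
        rintro ⟨-, -, rfl, rfl⟩; exact hgh (le_refl _)
      rw [lam_zero_gh r hgh, if_neg z1, if_neg z2, if_neg z3]
      norm_num
  · have z1 : ¬(e = Af (σa k) ∧ f = Bf (σb l) ∧ g = Af (τa i) ∧ h = Af (τa i)) := by
      rintro ⟨rfl, rfl, -, -⟩; exact hef af_le_bf
    have z2 : ¬(e = Af (σa k) ∧ f = Af (σa k) ∧ g = Af (τa i) ∧ h = Af (τa i)) := by
      rintro ⟨rfl, rfl, -, -⟩; exact hef (le_refl _)
    have z3 : ¬(e = Bf (σb l) ∧ f = Bf (σb l) ∧ g = Af (τa i) ∧ h = Af (τa i)) := by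
      rintro ⟨rfl, rfl, -, -⟩; exact hef (le_refl _)
    rw [lam_zero_ef r hef, if_neg z1, if_neg z2, if_neg z3]
    norm_num

lemma lamBC_closed (hc : comul2 ∘ₗ r = tmap r r ∘ₗ comul2)
    (heps : eps2 ∘ₗ r = eps2)
    (hind : Induces r (fun _ y => phiL σa σb y) (fun x _ => phiR τa τb x))
    (j : Fin v) (k : Fin u) (l : Fin v)
    (hv1 : lam r (Bf j) (Bf j) (Af k) (Bf l)
        (Af (σa k)) (Bf (σb l)) (Bf (τb j)) (Bf (τb j)) = 1)
    (hv2 : lam r (Bf j) (Bf j) (Af k) (Bf l)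
        (Af (σa k)) (Af (σa k)) (Bf (τb j)) (Bf (τb j)) = βb)
    (e f g h : Xf u v) :
    lam r (Bf j) (Bf j) (Af k) (Bf l) e f g h
      = (if e = Af (σa k) ∧ f = Bf (σb l) ∧ g = Bf (τb j) ∧ h = Bf (τb j) then 1 else 0)
        + (if e = Af (σa k) ∧ f = Af (σa k) ∧ g = Bf (τb j) ∧ h = Bf (τb j) then βb else 0)
        + (if e = Bf (σb l) ∧ f = Bf (σb l) ∧ g = Bf (τb j) ∧ h = Bf (τb j) then -βb else 0) := by
  by_cases hef : e ≤ f
  · by_cases hgh : g ≤ h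
    · rw [lam_eq r (le_refl _) af_le_bf hef hgh,
        show ((⟨(Bf j, Bf j), le_refl (Bf j : Xf u v)⟩ : Y (Xf u v)),
          (⟨(Af k, Bf l), af_le_bf⟩ : Y (Xf u v)))
          = ((yB j : Y (Xf u v)), (yC k l : Y (Xf u v))) from rfl,
        rBC_formula hc heps hind j k l hv1 hv2]
      simp only [Finsupp.add_apply, Finsupp.single_apply, Prod.mk.injEq,
        yA_eq_mk, yB_eq_mk, yC_eq_mk, and_assoc]
    · have z1 : ¬(e = Af (σa k) ∧ f = Bf (σb l) ∧ g = Bf (τb j) ∧ h = Bf (τb j)) := by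
        rintro ⟨-, -, rfl, rfl⟩; exact hgh (le_refl _)
      have z2 : ¬(e = Af (σa k) ∧ f = Af (σa k) ∧ g = Bf (τb j) ∧ h = Bf (τb j)) := by
        rintro ⟨-, -, rfl, rfl⟩; exact hgh (le_refl _)
      have z3 : ¬(e = Bf (σb l) ∧ f = Bf (σb l) ∧ g = Bf (τb j) ∧ h = Bf (τb j)) := by
        rintro ⟨-, -, rfl, rfl⟩; exact hgh (le_refl _)
      rw [lam_zero_gh r hgh, if_neg z1, if_neg z2, if_neg z3]
      norm_num
  · have z1 : ¬(e = Af (σa k) ∧ f = Bf (σb l) ∧ g = Bf (τb j) ∧ h = Bf (τb j)) := by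
      rintro ⟨rfl, rfl, -, -⟩; exact hef af_le_bf
    have z2 : ¬(e = Af (σa k) ∧ f = Af (σa k) ∧ g = Bf (τb j) ∧ h = Bf (τb j)) := by
      rintro ⟨rfl, rfl, -, -⟩; exact hef (le_refl _)
    have z3 : ¬(e = Bf (σb l) ∧ f = Bf (σb l) ∧ g = Bf (τb j) ∧ h = Bf (τb j)) := by
      rintro ⟨rfl, rfl, -, -⟩; exact hef (le_refl _)
    rw [lam_zero_ef r hef, if_neg z1, if_neg z2, if_neg z3]
    norm_num

end Closed

section CC

set_option linter.unusedSectionVars false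
set_option maxHeartbeats 4000000

variable {K : Type} [Field K] {u v : ℕ}
  {σa τa : Equiv.Perm (Fin u)} {σb τb : Equiv.Perm (Fin v)}
  {r : Inc2 K (Xf u v) →ₗ[K] Inc2 K (Xf u v)} {βa βb Γ : K}

lemma lamCC_zero (hc : comul2 ∘ₗ r = tmap r r ∘ₗ comul2)
    (heps : eps2 ∘ₗ r = eps2)
    (hind : Induces r (fun _ y => phiL σa σb y) (fun x _ => phiR τa τb x))
    (hAC1 : ∀ i k l, lam r (Af i) (Af i) (Af k) (Bf l)
        (Af (σa k)) (Bf (σb l)) (Af (τa i)) (Af (τa i)) = 1)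
    (hAC2 : ∀ i k l, lam r (Af i) (Af i) (Af k) (Bf l)
        (Af (σa k)) (Af (σa k)) (Af (τa i)) (Af (τa i)) = βa)
    (hCB1 : ∀ k l j, lam r (Af k) (Bf l) (Bf j) (Bf j)
        (Bf (σb j)) (Bf (σb j)) (Af (τa k)) (Bf (τb l)) = 1)
    (hCB2 : ∀ k l j, lam r (Af k) (Bf l) (Bf j) (Bf j)
        (Bf (σb j)) (Bf (σb j)) (Af (τa k)) (Af (τa k)) = -βb)
    (hCA1 : ∀ k l i, lam r (Af k) (Bf l) (Af i) (Af i)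
        (Af (σa i)) (Af (σa i)) (Af (τa k)) (Bf (τb l)) = 1)
    (hCA2 : ∀ k l i, lam r (Af k) (Bf l) (Af i) (Af i)
        (Af (σa i)) (Af (σa i)) (Af (τa k)) (Af (τa k)) = -βa)
    (hBC1 : ∀ j k l, lam r (Bf j) (Bf j) (Af k) (Bf l)
        (Af (σa k)) (Bf (σb l)) (Bf (τb j)) (Bf (τb j)) = 1)
    (hBC2 : ∀ j k l, lam r (Bf j) (Bf j) (Af k) (Bf l)
        (Af (σa k)) (Af (σa k)) (Bf (τb j)) (Bf (τb j)) = βb)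
    (i : Fin u) (j : Fin v) (k : Fin u) (l : Fin v) (e f g h : Xf u v)
    (hne1 : ¬(e = Af (σa k) ∧ f = Bf (σb l) ∧ g = Af (τa i) ∧ h = Bf (τb j)))
    (hne2 : ¬(e = Af (σa k) ∧ f = Bf (σb l) ∧ g = Af (τa i) ∧ h = Af (τa i)))
    (hne3 : ¬(e = Af (σa k) ∧ f = Bf (σb l) ∧ g = Bf (τb j) ∧ h = Bf (τb j)))
    (hne4 : ¬(e = Af (σa k) ∧ f = Af (σa k) ∧ g = Af (τa i) ∧ h = Bf (τb j)))
    (hne5 : ¬(e = Bf (σb l) ∧ f = Bf (σb l) ∧ g = Af (τa i) ∧ h = Bf (τb j)))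
    (hne6 : ¬(e = Af (σa k) ∧ f = Af (σa k) ∧ g = Af (τa i) ∧ h = Af (τa i)))
    (hne7 : ¬(e = Af (σa k) ∧ f = Af (σa k) ∧ g = Bf (τb j) ∧ h = Bf (τb j)))
    (hne8 : ¬(e = Bf (σb l) ∧ f = Bf (σb l) ∧ g = Af (τa i) ∧ h = Af (τa i)))
    (hne9 : ¬(e = Bf (σb l) ∧ f = Bf (σb l) ∧ g = Bf (τb j) ∧ h = Bf (τb j))) :
    lam r (Af i) (Bf j) (Af k) (Bf l) e f g h = 0 := by
  by_cases hef : e ≤ f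
  case neg => exact lam_zero_ef r hef
  by_cases hgh : g ≤ h
  case neg => exact lam_zero_gh r hgh
  by_cases hC : f = Bf (σb l) ∧ h = Bf (τb j)
  · obtain ⟨rfl, rfl⟩ := hC
    rcases le_bf_cases hgh with ⟨t, rfl⟩ | rfl
    · by_cases ht : t = τa i
      · subst ht
        rcases le_bf_cases hef with ⟨s, rfl⟩ | rfl
        · by_cases hs : s = σa k
          · subst hs; exact absurd ⟨rfl, rfl, rfl, rfl⟩ hne1
          · -- B1 : e = Af s, s ≠ σa k
            have hm2 := masterCC (e1 := Af s) (e2 := Af s) (e3 := Bf (σb l))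
              (g1 := Af (τa i)) (g2 := Af (τa i)) (g3 := Bf (τb j)) hc i j k l
              (le_refl _) af_le_bf (le_refl _) af_le_bf
            simp only [lamG hind (Af i) (Af k), lamG hind (Bf j) (Bf l),
              lamAC_closed hc heps hind i k l (hAC1 i k l) (hAC2 i k l),
              lamCB_closed hc heps hind i j l (hCB1 i j l) (hCB2 i j l),
              lamCA_closed hc heps hind i j k (hCA1 i j k) (hCA2 i j k),
              lamBC_closed hc heps hind j k l (hBC1 j k l) (hBC2 j k l),
              phiL_af, phiL_bf, phiR_af, phiR_bf] at hm2
            simp only [hs, af_ne_bf', bf_ne_af', af_inj, bf_inj, and_true, true_and,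
              and_false, false_and, if_true, if_false, mul_zero, zero_mul, mul_one,
              one_mul, add_zero, zero_add] at hm2
            exact hm2
        · exact absurd ⟨rfl, rfl, rfl, rfl⟩ hne5
      · -- B2 : g = Af t, t ≠ τa i, e arbitrary
        have hm2 := masterCC (e1 := e) (e2 := e) (e3 := Bf (σb l))
          (g1 := Af t) (g2 := Af t) (g3 := Bf (τb j)) hc i j k l
          (le_refl _) hef (le_refl _) af_le_bf
        simp only [lamG hind (Af i) (Af k), lamG hind (Bf j) (Bf l),
          lamAC_closed hc heps hind i k l (hAC1 i k l) (hAC2 i k l),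
          lamCB_closed hc heps hind i j l (hCB1 i j l) (hCB2 i j l),
          lamCA_closed hc heps hind i j k (hCA1 i j k) (hCA2 i j k),
          lamBC_closed hc heps hind j k l (hBC1 j k l) (hBC2 j k l),
          phiL_af, phiL_bf, phiR_af, phiR_bf] at hm2
        simp only [ht, af_ne_bf', bf_ne_af', af_inj, bf_inj, and_true, true_and,
          and_false, false_and, if_true, if_false, mul_zero, zero_mul, mul_one,
          one_mul, add_zero, zero_add] at hm2
        exact hm2
    · rcases le_bf_cases hef with ⟨s, rfl⟩ | rfl
      · by_cases hs : s = σa k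
        · subst hs; exact absurd ⟨rfl, rfl, rfl, rfl⟩ hne3
        · have hm2 := masterCC (e1 := Af s) (e2 := Af s) (e3 := Bf (σb l))
            (g1 := Bf (τb j)) (g2 := Bf (τb j)) (g3 := Bf (τb j)) hc i j k l
            (le_refl _) af_le_bf (le_refl _) (le_refl _)
          simp only [lamG hind (Af i) (Af k), lamG hind (Bf j) (Bf l),
            lamAC_closed hc heps hind i k l (hAC1 i k l) (hAC2 i k l),
            lamCB_closed hc heps hind i j l (hCB1 i j l) (hCB2 i j l),
            lamCA_closed hc heps hind i j k (hCA1 i j k) (hCA2 i j k),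
            lamBC_closed hc heps hind j k l (hBC1 j k l) (hBC2 j k l),
            phiL_af, phiL_bf, phiR_af, phiR_bf] at hm2
          simp only [hs, af_ne_bf', bf_ne_af', af_inj, bf_inj, and_true, true_and,
            and_false, false_and, if_true, if_false, mul_zero, zero_mul, mul_one,
            one_mul, add_zero, zero_add] at hm2
          exact hm2
      · exact absurd ⟨rfl, rfl, rfl, rfl⟩ hne9
  · -- case A
    have hm := masterCC (e1 := e) (e2 := f) (e3 := f) (g1 := g) (g2 := h) (g3 := h)
      hc i j k l hef (le_refl _) hgh (le_refl _)
    simp only [lamG hind (Af i) (Af k), lamG hind (Bf j) (Bf l),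
      lamAC_closed hc heps hind i k l (hAC1 i k l) (hAC2 i k l),
      lamCB_closed hc heps hind i j l (hCB1 i j l) (hCB2 i j l),
      lamCA_closed hc heps hind i j k (hCA1 i j k) (hCA2 i j k),
      lamBC_closed hc heps hind j k l (hBC1 j k l) (hBC2 j k l),
      phiL_af, phiL_bf, phiR_af, phiR_bf] at hm
    have hI2 : ¬(f = Bf (σb l) ∧ f = Bf (σb l) ∧ h = Bf (τb j) ∧ h = Bf (τb j)) :=
      fun hh => hC ⟨hh.1, hh.2.2.1⟩
    rw [if_neg hne6, if_neg hne6, if_neg hne6, if_neg hne2, if_neg hne8, if_neg hne4,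
      if_neg hne7, if_neg hI2, if_neg hI2, if_neg hI2] at hm
    simp only [zero_mul, mul_zero, add_zero, zero_add] at hm
    exact hm

end CC

section CCFormula

set_option linter.unusedSectionVars false
set_option maxHeartbeats 4000000

variable {K : Type} [Field K] {u v : ℕ}
  {σa τa : Equiv.Perm (Fin u)} {σb τb : Equiv.Perm (Fin v)}
  {r : Inc2 K (Xf u v) →ₗ[K] Inc2 K (Xf u v)} {βa βb Γ : K}

lemma rCC_formula (hc : comul2 ∘ₗ r = tmap r r ∘ₗ comul2)
    (heps : eps2 ∘ₗ r = eps2)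
    (hind : Induces r (fun _ y => phiL σa σb y) (fun x _ => phiR τa τb x))
    (hAC1 : ∀ i k l, lam r (Af i) (Af i) (Af k) (Bf l)
        (Af (σa k)) (Bf (σb l)) (Af (τa i)) (Af (τa i)) = 1)
    (hAC2 : ∀ i k l, lam r (Af i) (Af i) (Af k) (Bf l)
        (Af (σa k)) (Af (σa k)) (Af (τa i)) (Af (τa i)) = βa)
    (hCB1 : ∀ k l j, lam r (Af k) (Bf l) (Bf j) (Bf j)
        (Bf (σb j)) (Bf (σb j)) (Af (τa k)) (Bf (τb l)) = 1)
    (hCB2 : ∀ k l j, lam r (Af k) (Bf l) (Bf j) (Bf j)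
        (Bf (σb j)) (Bf (σb j)) (Af (τa k)) (Af (τa k)) = -βb)
    (hCA1 : ∀ k l i, lam r (Af k) (Bf l) (Af i) (Af i)
        (Af (σa i)) (Af (σa i)) (Af (τa k)) (Bf (τb l)) = 1)
    (hCA2 : ∀ k l i, lam r (Af k) (Bf l) (Af i) (Af i)
        (Af (σa i)) (Af (σa i)) (Af (τa k)) (Af (τa k)) = -βa)
    (hBC1 : ∀ j k l, lam r (Bf j) (Bf j) (Af k) (Bf l)
        (Af (σa k)) (Bf (σb l)) (Bf (τb j)) (Bf (τb j)) = 1)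
    (hBC2 : ∀ j k l, lam r (Bf j) (Bf j) (Af k) (Bf l)
        (Af (σa k)) (Af (σa k)) (Bf (τb j)) (Bf (τb j)) = βb)
    (hGam : ∀ i j k l, lam r (Af i) (Bf j) (Af k) (Bf l)
        (Af (σa k)) (Af (σa k)) (Af (τa i)) (Af (τa i)) = Γ)
    (i : Fin u) (j : Fin v) (k : Fin u) (l : Fin v) :
    r (single (yC i j, yC k l) 1)
      = single ((yC (σa k) (σb l) : Y (Xf u v)), (yC (τa i) (τb j) : Y (Xf u v))) 1
        + single ((yC (σa k) (σb l) : Y (Xf u v)), (yA (τa i) : Y (Xf u v))) (-βb)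
        + single ((yC (σa k) (σb l) : Y (Xf u v)), (yB (τb j) : Y (Xf u v))) βa
        + single ((yA (σa k) : Y (Xf u v)), (yC (τa i) (τb j) : Y (Xf u v))) βb
        + single ((yB (σb l) : Y (Xf u v)), (yC (τa i) (τb j) : Y (Xf u v))) (-βa)
        + single ((yA (σa k) : Y (Xf u v)), (yA (τa i) : Y (Xf u v))) Γ
        + single ((yA (σa k) : Y (Xf u v)), (yB (τb j) : Y (Xf u v))) (βa * βb)
        + single ((yB (σb l) : Y (Xf u v)), (yA (τa i) : Y (Xf u v))) (βa * βb)
        + single ((yB (σb l) : Y (Xf u v)), (yB (τb j) : Y (Xf u v))) (-Γ - 2 * (βa * βb)) := by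
  classical
  set w := r (single (yC i j, yC k l) 1) with hw
  set K1 : Y (Xf u v) × Y (Xf u v) := (yC (σa k) (σb l), yC (τa i) (τb j)) with hK1
  set K2 : Y (Xf u v) × Y (Xf u v) := (yC (σa k) (σb l), yA (τa i)) with hK2
  set K3 : Y (Xf u v) × Y (Xf u v) := (yC (σa k) (σb l), yB (τb j)) with hK3
  set K4 : Y (Xf u v) × Y (Xf u v) := (yA (σa k), yC (τa i) (τb j)) with hK4
  set K5 : Y (Xf u v) × Y (Xf u v) := (yB (σb l), yC (τa i) (τb j)) with hK5
  set K6 : Y (Xf u v) × Y (Xf u v) := (yA (σa k), yA (τa i)) with hK6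
  set K7 : Y (Xf u v) × Y (Xf u v) := (yA (σa k), yB (τb j)) with hK7
  set K8 : Y (Xf u v) × Y (Xf u v) := (yB (σb l), yA (τa i)) with hK8
  set K9 : Y (Xf u v) × Y (Xf u v) := (yB (σb l), yB (τb j)) with hK9
  have hzero : ∀ pt : Y (Xf u v) × Y (Xf u v),
      pt ∉ ({K1, K2, K3, K4, K5, K6, K7, K8, K9} : Finset _) → w pt = 0 := by
    rintro ⟨⟨⟨e, f⟩, hef⟩, ⟨⟨g, h⟩, hgh⟩⟩ hmem
    simp only [Finset.mem_insert, Finset.mem_singleton, not_or] at hmem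
    obtain ⟨m1, m2, m3, m4, m5, m6, m7, m8, m9⟩ := hmem
    have hl : w (⟨(e, f), hef⟩, ⟨(g, h), hgh⟩)
        = lam r (Af i) (Bf j) (Af k) (Bf l) e f g h :=
      (lam_eq r af_le_bf af_le_bf hef hgh).symm
    rw [hl]
    apply lamCC_zero hc heps hind hAC1 hAC2 hCB1 hCB2 hCA1 hCA2 hBC1 hBC2 i j k l e f g h
    · rintro ⟨rfl, rfl, rfl, rfl⟩; exact m1 rfl
    · rintro ⟨rfl, rfl, rfl, rfl⟩; exact m2 rfl
    · rintro ⟨rfl, rfl, rfl, rfl⟩; exact m3 rfl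
    · rintro ⟨rfl, rfl, rfl, rfl⟩; exact m4 rfl
    · rintro ⟨rfl, rfl, rfl, rfl⟩; exact m5 rfl
    · rintro ⟨rfl, rfl, rfl, rfl⟩; exact m6 rfl
    · rintro ⟨rfl, rfl, rfl, rfl⟩; exact m7 rfl
    · rintro ⟨rfl, rfl, rfl, rfl⟩; exact m8 rfl
    · rintro ⟨rfl, rfl, rfl, rfl⟩; exact m9 rfl
  have hpart := eq_sum_single_of_support w {K1, K2, K3, K4, K5, K6, K7, K8, K9} hzero
  rw [Finset.sum_insert (by simp [hK1, hK2, hK3, hK4, hK5, hK6, hK7, hK8, hK9, Prod.ext_iff]),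
    Finset.sum_insert (by simp [hK2, hK3, hK4, hK5, hK6, hK7, hK8, hK9, Prod.ext_iff]),
    Finset.sum_insert (by simp [hK3, hK4, hK5, hK6, hK7, hK8, hK9, Prod.ext_iff]),
    Finset.sum_insert (by simp [hK4, hK5, hK6, hK7, hK8, hK9, Prod.ext_iff]),
    Finset.sum_insert (by simp [hK5, hK6, hK7, hK8, hK9, Prod.ext_iff]),
    Finset.sum_insert (by simp [hK6, hK7, hK8, hK9, Prod.ext_iff]),
    Finset.sum_insert (by simp [hK7, hK8, hK9, Prod.ext_iff]),
    Finset.sum_insert (by simp [hK8, hK9, Prod.ext_iff]),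
    Finset.sum_singleton] at hpart
  have EV : ∀ p : Prop, p = p := fun _ => rfl
  have hval1 : w K1 = 1 := by
    have hl : w K1 = lam r (Af i) (Bf j) (Af k) (Bf l)
        (Af (σa k)) (Bf (σb l)) (Af (τa i)) (Bf (τb j)) :=
      (lam_eq r af_le_bf af_le_bf af_le_bf af_le_bf).symm
    rw [hl]
    have hm := masterCC (e1 := Af (σa k)) (e2 := Af (σa k)) (e3 := Bf (σb l))
      (g1 := Af (τa i)) (g2 := Bf (τb j)) (g3 := Bf (τb j)) hc i j k l
      (le_refl _) af_le_bf af_le_bf (le_refl _)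
    simp only [lamG hind (Af i) (Af k), lamG hind (Bf j) (Bf l),
      lamAC_closed hc heps hind i k l (hAC1 i k l) (hAC2 i k l),
      lamCB_closed hc heps hind i j l (hCB1 i j l) (hCB2 i j l),
      lamCA_closed hc heps hind i j k (hCA1 i j k) (hCA2 i j k),
      lamBC_closed hc heps hind j k l (hBC1 j k l) (hBC2 j k l),
      phiL_af, phiL_bf, phiR_af, phiR_bf, af_ne_bf', bf_ne_af', af_inj, bf_inj,
      and_true, true_and, and_false, false_and, if_true, if_false, mul_zero, zero_mul,
      mul_one, one_mul, add_zero, zero_add] at hm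
    linear_combination hm
  have hval2 : w K2 = -βb := by
    have hl : w K2 = lam r (Af i) (Bf j) (Af k) (Bf l)
        (Af (σa k)) (Bf (σb l)) (Af (τa i)) (Af (τa i)) :=
      (lam_eq r af_le_bf af_le_bf af_le_bf (le_refl _)).symm
    rw [hl]
    have hm := masterCC (e1 := Af (σa k)) (e2 := Bf (σb l)) (e3 := Bf (σb l))
      (g1 := Af (τa i)) (g2 := Af (τa i)) (g3 := Af (τa i)) hc i j k l
      af_le_bf (le_refl _) (le_refl _) (le_refl _)
    simp only [lamG hind (Af i) (Af k), lamG hind (Bf j) (Bf l),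
      lamAC_closed hc heps hind i k l (hAC1 i k l) (hAC2 i k l),
      lamCB_closed hc heps hind i j l (hCB1 i j l) (hCB2 i j l),
      lamCA_closed hc heps hind i j k (hCA1 i j k) (hCA2 i j k),
      lamBC_closed hc heps hind j k l (hBC1 j k l) (hBC2 j k l),
      phiL_af, phiL_bf, phiR_af, phiR_bf, af_ne_bf', bf_ne_af', af_inj, bf_inj,
      and_true, true_and, and_false, false_and, if_true, if_false, mul_zero, zero_mul,
      mul_one, one_mul, add_zero, zero_add] at hm
    linear_combination hm
  have hval3 : w K3 = βa := by
    have hl : w K3 = lam r (Af i) (Bf j) (Af k) (Bf l)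
        (Af (σa k)) (Bf (σb l)) (Bf (τb j)) (Bf (τb j)) :=
      (lam_eq r af_le_bf af_le_bf af_le_bf (le_refl _)).symm
    rw [hl]
    have hm := masterCC (e1 := Af (σa k)) (e2 := Af (σa k)) (e3 := Bf (σb l))
      (g1 := Bf (τb j)) (g2 := Bf (τb j)) (g3 := Bf (τb j)) hc i j k l
      (le_refl _) af_le_bf (le_refl _) (le_refl _)
    simp only [lamG hind (Af i) (Af k), lamG hind (Bf j) (Bf l),
      lamAC_closed hc heps hind i k l (hAC1 i k l) (hAC2 i k l),
      lamCB_closed hc heps hind i j l (hCB1 i j l) (hCB2 i j l),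
      lamCA_closed hc heps hind i j k (hCA1 i j k) (hCA2 i j k),
      lamBC_closed hc heps hind j k l (hBC1 j k l) (hBC2 j k l),
      phiL_af, phiL_bf, phiR_af, phiR_bf, af_ne_bf', bf_ne_af', af_inj, bf_inj,
      and_true, true_and, and_false, false_and, if_true, if_false, mul_zero, zero_mul,
      mul_one, one_mul, add_zero, zero_add] at hm
    linear_combination hm
  have hval4 : w K4 = βb := by
    have hl : w K4 = lam r (Af i) (Bf j) (Af k) (Bf l)
        (Af (σa k)) (Af (σa k)) (Af (τa i)) (Bf (τb j)) :=
      (lam_eq r af_le_bf af_le_bf (le_refl _) af_le_bf).symm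
    rw [hl]
    have hm := masterCC (e1 := Af (σa k)) (e2 := Af (σa k)) (e3 := Af (σa k))
      (g1 := Af (τa i)) (g2 := Bf (τb j)) (g3 := Bf (τb j)) hc i j k l
      (le_refl _) (le_refl _) af_le_bf (le_refl _)
    simp only [lamG hind (Af i) (Af k), lamG hind (Bf j) (Bf l),
      lamAC_closed hc heps hind i k l (hAC1 i k l) (hAC2 i k l),
      lamCB_closed hc heps hind i j l (hCB1 i j l) (hCB2 i j l),
      lamCA_closed hc heps hind i j k (hCA1 i j k) (hCA2 i j k),
      lamBC_closed hc heps hind j k l (hBC1 j k l) (hBC2 j k l),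
      phiL_af, phiL_bf, phiR_af, phiR_bf, af_ne_bf', bf_ne_af', af_inj, bf_inj,
      and_true, true_and, and_false, false_and, if_true, if_false, mul_zero, zero_mul,
      mul_one, one_mul, add_zero, zero_add] at hm
    linear_combination hm
  have hval5 : w K5 = -βa := by
    have hl : w K5 = lam r (Af i) (Bf j) (Af k) (Bf l)
        (Bf (σb l)) (Bf (σb l)) (Af (τa i)) (Bf (τb j)) :=
      (lam_eq r af_le_bf af_le_bf (le_refl _) af_le_bf).symm
    rw [hl]
    have hm := masterCC (e1 := Bf (σb l)) (e2 := Bf (σb l)) (e3 := Bf (σb l))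
      (g1 := Af (τa i)) (g2 := Af (τa i)) (g3 := Bf (τb j)) hc i j k l
      (le_refl _) (le_refl _) (le_refl _) af_le_bf
    simp only [lamG hind (Af i) (Af k), lamG hind (Bf j) (Bf l),
      lamAC_closed hc heps hind i k l (hAC1 i k l) (hAC2 i k l),
      lamCB_closed hc heps hind i j l (hCB1 i j l) (hCB2 i j l),
      lamCA_closed hc heps hind i j k (hCA1 i j k) (hCA2 i j k),
      lamBC_closed hc heps hind j k l (hBC1 j k l) (hBC2 j k l),
      phiL_af, phiL_bf, phiR_af, phiR_bf, af_ne_bf', bf_ne_af', af_inj, bf_inj,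
      and_true, true_and, and_false, false_and, if_true, if_false, mul_zero, zero_mul,
      mul_one, one_mul, add_zero, zero_add] at hm
    linear_combination hm
  have hval6 : w K6 = Γ := by
    have hl : w K6 = lam r (Af i) (Bf j) (Af k) (Bf l)
        (Af (σa k)) (Af (σa k)) (Af (τa i)) (Af (τa i)) :=
      (lam_eq r af_le_bf af_le_bf (le_refl _) (le_refl _)).symm
    rw [hl, hGam i j k l]
  have hval7 : w K7 = βa * βb := by
    have hl : w K7 = lam r (Af i) (Bf j) (Af k) (Bf l)
        (Af (σa k)) (Af (σa k)) (Bf (τb j)) (Bf (τb j)) :=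
      (lam_eq r af_le_bf af_le_bf (le_refl _) (le_refl _)).symm
    rw [hl]
    have hm := masterCC (e1 := Af (σa k)) (e2 := Af (σa k)) (e3 := Af (σa k))
      (g1 := Bf (τb j)) (g2 := Bf (τb j)) (g3 := Bf (τb j)) hc i j k l
      (le_refl _) (le_refl _) (le_refl _) (le_refl _)
    simp only [lamG hind (Af i) (Af k), lamG hind (Bf j) (Bf l),
      lamAC_closed hc heps hind i k l (hAC1 i k l) (hAC2 i k l),
      lamCB_closed hc heps hind i j l (hCB1 i j l) (hCB2 i j l),
      lamCA_closed hc heps hind i j k (hCA1 i j k) (hCA2 i j k),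
      lamBC_closed hc heps hind j k l (hBC1 j k l) (hBC2 j k l),
      phiL_af, phiL_bf, phiR_af, phiR_bf, af_ne_bf', bf_ne_af', af_inj, bf_inj,
      and_true, true_and, and_false, false_and, if_true, if_false, mul_zero, zero_mul,
      mul_one, one_mul, add_zero, zero_add] at hm
    linear_combination hm
  have hval8 : w K8 = βa * βb := by
    have hl : w K8 = lam r (Af i) (Bf j) (Af k) (Bf l)
        (Bf (σb l)) (Bf (σb l)) (Af (τa i)) (Af (τa i)) :=
      (lam_eq r af_le_bf af_le_bf (le_refl _) (le_refl _)).symm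
    rw [hl]
    have hm := masterCC (e1 := Bf (σb l)) (e2 := Bf (σb l)) (e3 := Bf (σb l))
      (g1 := Af (τa i)) (g2 := Af (τa i)) (g3 := Af (τa i)) hc i j k l
      (le_refl _) (le_refl _) (le_refl _) (le_refl _)
    simp only [lamG hind (Af i) (Af k), lamG hind (Bf j) (Bf l),
      lamAC_closed hc heps hind i k l (hAC1 i k l) (hAC2 i k l),
      lamCB_closed hc heps hind i j l (hCB1 i j l) (hCB2 i j l),
      lamCA_closed hc heps hind i j k (hCA1 i j k) (hCA2 i j k),
      lamBC_closed hc heps hind j k l (hBC1 j k l) (hBC2 j k l),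
      phiL_af, phiL_bf, phiR_af, phiR_bf, af_ne_bf', bf_ne_af', af_inj, bf_inj,
      and_true, true_and, and_false, false_and, if_true, if_false, mul_zero, zero_mul,
      mul_one, one_mul, add_zero, zero_add] at hm
    linear_combination hm
  have hval9 : w K9 = -Γ - 2 * (βa * βb) := by
    have hepsw : eps2 w = 0 := by
      have hcg := congrArg
        (fun (ψ : Inc2 K (Xf u v) →ₗ[K] K) => ψ (single (yC i j, yC k l) 1)) heps
      simp only [LinearMap.comp_apply] at hcg
      rw [← hw] at hcg
      rw [hcg, eps2_single, if_neg]
      rintro ⟨h1, -⟩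
      exact af_ne_bf h1
    rw [hpart] at hepsw
    simp only [map_add, eps2_single] at hepsw
    have n1 : ¬(K1.1.1.1 = K1.1.1.2 ∧ K1.2.1.1 = K1.2.1.2) := fun hh => af_ne_bf hh.1
    have n2 : ¬(K2.1.1.1 = K2.1.1.2 ∧ K2.2.1.1 = K2.2.1.2) := fun hh => af_ne_bf hh.1
    have n3 : ¬(K3.1.1.1 = K3.1.1.2 ∧ K3.2.1.1 = K3.2.1.2) := fun hh => af_ne_bf hh.1
    have n4 : ¬(K4.1.1.1 = K4.1.1.2 ∧ K4.2.1.1 = K4.2.1.2) := fun hh => af_ne_bf hh.2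
    have n5 : ¬(K5.1.1.1 = K5.1.1.2 ∧ K5.2.1.1 = K5.2.1.2) := fun hh => af_ne_bf hh.2
    have p6 : K6.1.1.1 = K6.1.1.2 ∧ K6.2.1.1 = K6.2.1.2 := ⟨rfl, rfl⟩
    have p7 : K7.1.1.1 = K7.1.1.2 ∧ K7.2.1.1 = K7.2.1.2 := ⟨rfl, rfl⟩
    have p8 : K8.1.1.1 = K8.1.1.2 ∧ K8.2.1.1 = K8.2.1.2 := ⟨rfl, rfl⟩
    have p9 : K9.1.1.1 = K9.1.1.2 ∧ K9.2.1.1 = K9.2.1.2 := ⟨rfl, rfl⟩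
    rw [if_neg n1, if_neg n2, if_neg n3, if_neg n4, if_neg n5, if_pos p6, if_pos p7,
      if_pos p8, if_pos p9, hval6, hval7, hval8] at hepsw
    linear_combination hepsw
  rw [hpart, hval1, hval2, hval3, hval4, hval5, hval6, hval7, hval8, hval9]
  abel

end CCFormula

section BraidSetup

set_option linter.unusedSectionVars false
set_option maxHeartbeats 4000000

variable {K : Type} [Field K] {u v : ℕ}
  {σa τa : Equiv.Perm (Fin u)} {σb τb : Equiv.Perm (Fin v)}
  {r : Inc2 K (Xf u v) →ₗ[K] Inc2 K (Xf u v)} {βa βb Γ : K}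

lemma comm_a (hcomma : Commute σa τa) (x : Fin u) : τa (σa x) = σa (τa x) := by
  rw [← Equiv.Perm.mul_apply, ← Equiv.Perm.mul_apply, hcomma.symm.eq]
lemma comm_b (hcommb : Commute σb τb) (x : Fin v) : τb (σb x) = σb (τb x) := by
  rw [← Equiv.Perm.mul_apply, ← Equiv.Perm.mul_apply, hcommb.symm.eq]

lemma r12_single' (r : Inc2 K (Xf u v) →ₗ[K] Inc2 K (Xf u v)) (t1 t2 t3 : Y (Xf u v)) (c : K) :
    r12 r (single (t1, t2, t3) c)
      = c • mapDomain (fun p : Y (Xf u v) × Y (Xf u v) => (p.1, p.2, t3))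
          (r (single (t1, t2) 1)) := by
  have h1 : (single (t1, t2, t3) c : Inc3 K (Xf u v)) = c • single (t1, t2, t3) 1 := by
    rw [Finsupp.smul_single, smul_eq_mul, mul_one]
  rw [h1, map_smul]
  congr 1
  rw [r12, Finsupp.lsum_single, LinearMap.toSpanSingleton_apply, one_smul]
  rfl

lemma r23_single' (r : Inc2 K (Xf u v) →ₗ[K] Inc2 K (Xf u v)) (t1 t2 t3 : Y (Xf u v)) (c : K) :
    r23 r (single (t1, t2, t3) c)
      = c • mapDomain (fun q : Y (Xf u v) × Y (Xf u v) => (t1, q))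
          (r (single (t2, t3) 1)) := by
  have h1 : (single (t1, t2, t3) c : Inc3 K (Xf u v)) = c • single (t1, t2, t3) 1 := by
    rw [Finsupp.smul_single, smul_eq_mul, mul_one]
  rw [h1, map_smul]
  congr 1
  rw [r23, Finsupp.lsum_single, LinearMap.toSpanSingleton_apply, one_smul]
  rfl

lemma rAA (hind : Induces r (fun _ y => phiL σa σb y) (fun x _ => phiR τa τb x))
    (i k : Fin u) : r (single (yA i, yA k) 1)
      = single ((yA (σa k) : Y (Xf u v)), (yA (τa i) : Y (Xf u v))) 1 := hind (Af i) (Af k)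
lemma rAB (hind : Induces r (fun _ y => phiL σa σb y) (fun x _ => phiR τa τb x))
    (i : Fin u) (j : Fin v) : r (single (yA i, yB j) 1)
      = single ((yB (σb j) : Y (Xf u v)), (yA (τa i) : Y (Xf u v))) 1 := hind (Af i) (Bf j)
lemma rBA (hind : Induces r (fun _ y => phiL σa σb y) (fun x _ => phiR τa τb x))
    (j : Fin v) (k : Fin u) : r (single (yB j, yA k) 1)
      = single ((yA (σa k) : Y (Xf u v)), (yB (τb j) : Y (Xf u v))) 1 := hind (Bf j) (Af k)
lemma rBB (hind : Induces r (fun _ y => phiL σa σb y) (fun x _ => phiR τa τb x))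
    (j l : Fin v) : r (single (yB j, yB l) 1)
      = single ((yB (σb l) : Y (Xf u v)), (yB (τb j) : Y (Xf u v))) 1 := hind (Bf j) (Bf l)

end BraidSetup

section KeyLemma
set_option linter.unusedSectionVars false
set_option maxHeartbeats 16000000

variable {K : Type} [Field K] {u v : ℕ}
  {σa τa : Equiv.Perm (Fin u)} {σb τb : Equiv.Perm (Fin v)}
  {r : Inc2 K (Xf u v) →ₗ[K] Inc2 K (Xf u v)} {βa βb Γ : K}

lemma keyCCC
    (hind : Induces r (fun _ y => phiL σa σb y) (fun x _ => phiR τa τb x))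
    (hca : Commute σa τa) (hcb : Commute σb τb)
    (FCA : ∀ (k : Fin u) (l : Fin v) (i : Fin u), r (single (yC k l, yA i) 1)
      = single ((yA (σa i) : Y (Xf u v)), (yC (τa k) (τb l) : Y (Xf u v))) 1
        + (-βa) • single ((yA (σa i) : Y (Xf u v)), (yA (τa k) : Y (Xf u v))) 1
        + βa • single ((yA (σa i) : Y (Xf u v)), (yB (τb l) : Y (Xf u v))) 1)
    (FCB : ∀ (k : Fin u) (l : Fin v) (j : Fin v), r (single (yC k l, yB j) 1)
      = single ((yB (σb j) : Y (Xf u v)), (yC (τa k) (τb l) : Y (Xf u v))) 1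
        + (-βb) • single ((yB (σb j) : Y (Xf u v)), (yA (τa k) : Y (Xf u v))) 1
        + βb • single ((yB (σb j) : Y (Xf u v)), (yB (τb l) : Y (Xf u v))) 1)
    (FAC : ∀ (i k : Fin u) (l : Fin v), r (single (yA i, yC k l) 1)
      = single ((yC (σa k) (σb l) : Y (Xf u v)), (yA (τa i) : Y (Xf u v))) 1
        + βa • single ((yA (σa k) : Y (Xf u v)), (yA (τa i) : Y (Xf u v))) 1
        + (-βa) • single ((yB (σb l) : Y (Xf u v)), (yA (τa i) : Y (Xf u v))) 1)
    (FBC : ∀ (j : Fin v) (k : Fin u) (l : Fin v), r (single (yB j, yC k l) 1)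
      = single ((yC (σa k) (σb l) : Y (Xf u v)), (yB (τb j) : Y (Xf u v))) 1
        + βb • single ((yA (σa k) : Y (Xf u v)), (yB (τb j) : Y (Xf u v))) 1
        + (-βb) • single ((yB (σb l) : Y (Xf u v)), (yB (τb j) : Y (Xf u v))) 1)
    (FCC : ∀ (i : Fin u) (j : Fin v) (k : Fin u) (l : Fin v), r (single (yC i j, yC k l) 1)
      = single ((yC (σa k) (σb l) : Y (Xf u v)), (yC (τa i) (τb j) : Y (Xf u v))) 1
        + (-βb) • single ((yC (σa k) (σb l) : Y (Xf u v)), (yA (τa i) : Y (Xf u v))) 1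
        + βa • single ((yC (σa k) (σb l) : Y (Xf u v)), (yB (τb j) : Y (Xf u v))) 1
        + βb • single ((yA (σa k) : Y (Xf u v)), (yC (τa i) (τb j) : Y (Xf u v))) 1
        + (-βa) • single ((yB (σb l) : Y (Xf u v)), (yC (τa i) (τb j) : Y (Xf u v))) 1
        + Γ • single ((yA (σa k) : Y (Xf u v)), (yA (τa i) : Y (Xf u v))) 1
        + (βa * βb) • single ((yA (σa k) : Y (Xf u v)), (yB (τb j) : Y (Xf u v))) 1
        + (βa * βb) • single ((yB (σb l) : Y (Xf u v)), (yA (τa i) : Y (Xf u v))) 1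
        + (-Γ - 2 * (βa * βb)) • single ((yB (σb l) : Y (Xf u v)), (yB (τb j) : Y (Xf u v))) 1)
    (i : Fin u) (j : Fin v) (k : Fin u) (l : Fin v) (m : Fin u) (n : Fin v) :
    r12 r (r23 r (r12 r (single ((yC i j : Y (Xf u v)), (yC k l : Y (Xf u v)),
        (yC m n : Y (Xf u v))) 1)))
      = r23 r (r12 r (r23 r (single ((yC i j : Y (Xf u v)), (yC k l : Y (Xf u v)),
          (yC m n : Y (Xf u v))) 1)))
        + ((βa - βb) * (2 * Γ + 2 * βb * βa))
            • single ((yA (σa (σa m)) : Y (Xf u v)), (yA (σa (τa k)) : Y (Xf u v)),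
                (yA (τa (τa i)) : Y (Xf u v))) 1
        - ((βa - βb) * (2 * Γ + 2 * βb * βa))
            • single ((yB (σb (σb n)) : Y (Xf u v)), (yB (σb (τb l)) : Y (Xf u v)),
                (yB (τb (τb j)) : Y (Xf u v))) 1 := by
  simp only [r12_single', r23_single', map_add, map_smul, Finsupp.mapDomain_add,
    Finsupp.mapDomain_smul, Finsupp.mapDomain_single, rAA hind, rAB hind, rBA hind,
    rBB hind, FCA, FCB, FAC, FBC, FCC, comm_a hca, comm_b hcb, one_smul]
  match_scalars <;> ring

end KeyLemma


set_option maxHeartbeats 40000000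
set_option linter.unusedSectionVars false

/-- with constant parameters, if `ε = 1` and `α = 1`, then `r`
satisfies the braid equation iff `β_a = β_b`, or `β_a ≠ β_b` and
`2Γ + 2β_bβ_a = 0`. -/
theorem statement15 {K : Type} [Field K] (u v : ℕ) (hu : 0 < u) (hv : 0 < v)
    (huv : Nat.Coprime u v) (hroots : HasDistinctRoots K (u * v))
    (σa τa : Equiv.Perm (Fin u)) (σb τb : Equiv.Perm (Fin v))
    (hcomma : Commute σa τa) (hcommb : Commute σb τb)
    (hfca : IsFullCycle (σa * τa)) (hfcb : IsFullCycle (σb * τb))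
    (r : Inc2 K (Xf u v) →ₗ[K] Inc2 K (Xf u v))
    (hca : IsCoalgAuto r) (hnd : NonDeg r)
    (hind : Induces r (fun _ y => phiL σa σb y) (fun x _ => phiR τa τb x))
    (hsq1 : SetSq1 r (fun _ y => phiL σa σb y) (fun x _ => phiR τa τb x))
    (α βa βb ε Γ : K) (hα : α ≠ 0) (hε : ε = 1 ∨ ε = -1)
    (hαla : ∀ (i k : Fin u) (l : Fin v),
      alphaL r (phiL σa σb) (phiR τa τb) (Af i) (Af k) (Bf l) = α)
    (hαlb : ∀ (j : Fin v) (k : Fin u) (l : Fin v),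
      alphaL r (phiL σa σb) (phiR τa τb) (Bf j) (Af k) (Bf l) = ε * α)
    (hαra : ∀ (i k : Fin u) (l : Fin v),
      alphaR r (phiL σa σb) (phiR τa τb) (Af i) (Af k) (Bf l) = 1 / α)
    (hαrb : ∀ (j : Fin v) (k : Fin u) (l : Fin v),
      alphaR r (phiL σa σb) (phiR τa τb) (Bf j) (Af k) (Bf l) = ε / α)
    (hβla : ∀ (i k : Fin u) (l : Fin v),
      betaL r (phiL σa σb) (phiR τa τb) (Af i) (Af k) (Bf l) = βa)
    (hβlb : ∀ (j : Fin v) (k : Fin u) (l : Fin v),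
      betaL r (phiL σa σb) (phiR τa τb) (Bf j) (Af k) (Bf l) = βb)
    (hβra : ∀ (i k : Fin u) (l : Fin v),
      betaR r (phiL σa σb) (phiR τa τb) (Af i) (Af k) (Bf l) = -βa / α)
    (hβrb : ∀ (j : Fin v) (k : Fin u) (l : Fin v),
      betaR r (phiL σa σb) (phiR τa τb) (Bf j) (Af k) (Bf l) = -(ε * βb) / α)
    (hΓ : ∀ (i : Fin u) (j : Fin v) (k : Fin u) (l : Fin v),
      Gam r (phiL σa σb) (phiR τa τb) (Af i) (Bf j) (Af k) (Bf l) = Γ)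
    (hε1 : ε = 1) (hα1 : α = 1)
    : BraidEqR r ↔ (βa = βb ∨ (βa ≠ βb ∧ 2 * Γ + 2 * βb * βa = 0)) := by
  classical
  subst hε1
  subst hα1
  have hc : comul2 ∘ₗ r = tmap r r ∘ₗ comul2 := hca.2.1
  have heps : eps2 ∘ₗ r = eps2 := hca.2.2
  -- parameter values in lam form
  have hCA1 : ∀ (k : Fin u) (l : Fin v) (i : Fin u),
      lam r (Af k) (Bf l) (Af i) (Af i) (Af (σa i)) (Af (σa i)) (Af (τa k)) (Bf (τb l)) = 1 := by
    intro k l i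
    have h := hαra i k l
    rw [alphaR] at h
    simp only [phiL_af, phiR_af, phiR_bf] at h
    rw [h]; norm_num
  have hCA2 : ∀ (k : Fin u) (l : Fin v) (i : Fin u),
      lam r (Af k) (Bf l) (Af i) (Af i) (Af (σa i)) (Af (σa i)) (Af (τa k)) (Af (τa k)) = -βa := by
    intro k l i
    have h := hβra i k l
    rw [betaR] at h
    simp only [phiL_af, phiR_af, phiR_bf] at h
    rw [h]; ring
  have hCB1 : ∀ (k : Fin u) (l : Fin v) (j : Fin v),
      lam r (Af k) (Bf l) (Bf j) (Bf j) (Bf (σb j)) (Bf (σb j)) (Af (τa k)) (Bf (τb l)) = 1 := by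
    intro k l j
    have h := hαrb j k l
    rw [alphaR] at h
    simp only [phiL_bf, phiR_af, phiR_bf] at h
    rw [h]; norm_num
  have hCB2 : ∀ (k : Fin u) (l : Fin v) (j : Fin v),
      lam r (Af k) (Bf l) (Bf j) (Bf j) (Bf (σb j)) (Bf (σb j)) (Af (τa k)) (Af (τa k)) = -βb := by
    intro k l j
    have h := hβrb j k l
    rw [betaR] at h
    simp only [phiL_bf, phiR_af, phiR_bf] at h
    rw [h]; ring
  have hAC1 : ∀ (i k : Fin u) (l : Fin v),
      lam r (Af i) (Af i) (Af k) (Bf l) (Af (σa k)) (Bf (σb l)) (Af (τa i)) (Af (τa i)) = 1 := by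
    intro i k l
    have h := hαla i k l
    rw [alphaL] at h
    simp only [phiL_af, phiL_bf, phiR_af] at h
    exact h
  have hAC2 : ∀ (i k : Fin u) (l : Fin v),
      lam r (Af i) (Af i) (Af k) (Bf l) (Af (σa k)) (Af (σa k)) (Af (τa i)) (Af (τa i)) = βa := by
    intro i k l
    have h := hβla i k l
    rw [betaL] at h
    simp only [phiL_af, phiL_bf, phiR_af] at h
    exact h
  have hBC1 : ∀ (j : Fin v) (k : Fin u) (l : Fin v),
      lam r (Bf j) (Bf j) (Af k) (Bf l) (Af (σa k)) (Bf (σb l)) (Bf (τb j)) (Bf (τb j)) = 1 := by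
    intro j k l
    have h := hαlb j k l
    rw [alphaL] at h
    simp only [phiL_af, phiL_bf, phiR_bf] at h
    rw [h]; norm_num
  have hBC2 : ∀ (j : Fin v) (k : Fin u) (l : Fin v),
      lam r (Bf j) (Bf j) (Af k) (Bf l) (Af (σa k)) (Af (σa k)) (Bf (τb j)) (Bf (τb j)) = βb := by
    intro j k l
    have h := hβlb j k l
    rw [betaL] at h
    simp only [phiL_af, phiL_bf, phiR_bf] at h
    exact h
  have hGam : ∀ (i : Fin u) (j : Fin v) (k : Fin u) (l : Fin v),
      lam r (Af i) (Bf j) (Af k) (Bf l) (Af (σa k)) (Af (σa k)) (Af (τa i)) (Af (τa i)) = Γ := by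
    intro i j k l
    have h := hΓ i j k l
    rw [Gam] at h
    simp only [phiL_af, phiR_af] at h
    exact h
  -- smul-form formulas
  have FCA : ∀ (k : Fin u) (l : Fin v) (i : Fin u), r (single (yC k l, yA i) 1)
      = single ((yA (σa i) : Y (Xf u v)), (yC (τa k) (τb l) : Y (Xf u v))) 1
        + (-βa) • single ((yA (σa i) : Y (Xf u v)), (yA (τa k) : Y (Xf u v))) 1
        + βa • single ((yA (σa i) : Y (Xf u v)), (yB (τb l) : Y (Xf u v))) 1 := by
    intro k l i
    rw [rCA_formula hc heps hind k l i (hCA1 k l i) (hCA2 k l i)]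
    simp [Finsupp.smul_single]
  have FCB : ∀ (k : Fin u) (l : Fin v) (j : Fin v), r (single (yC k l, yB j) 1)
      = single ((yB (σb j) : Y (Xf u v)), (yC (τa k) (τb l) : Y (Xf u v))) 1
        + (-βb) • single ((yB (σb j) : Y (Xf u v)), (yA (τa k) : Y (Xf u v))) 1
        + βb • single ((yB (σb j) : Y (Xf u v)), (yB (τb l) : Y (Xf u v))) 1 := by
    intro k l j
    rw [rCB_formula hc heps hind k l j (hCB1 k l j) (hCB2 k l j)]
    simp [Finsupp.smul_single]
  have FAC : ∀ (i k : Fin u) (l : Fin v), r (single (yA i, yC k l) 1)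
      = single ((yC (σa k) (σb l) : Y (Xf u v)), (yA (τa i) : Y (Xf u v))) 1
        + βa • single ((yA (σa k) : Y (Xf u v)), (yA (τa i) : Y (Xf u v))) 1
        + (-βa) • single ((yB (σb l) : Y (Xf u v)), (yA (τa i) : Y (Xf u v))) 1 := by
    intro i k l
    rw [rAC_formula hc heps hind i k l (hAC1 i k l) (hAC2 i k l)]
    simp [Finsupp.smul_single]
  have FBC : ∀ (j : Fin v) (k : Fin u) (l : Fin v), r (single (yB j, yC k l) 1)
      = single ((yC (σa k) (σb l) : Y (Xf u v)), (yB (τb j) : Y (Xf u v))) 1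
        + βb • single ((yA (σa k) : Y (Xf u v)), (yB (τb j) : Y (Xf u v))) 1
        + (-βb) • single ((yB (σb l) : Y (Xf u v)), (yB (τb j) : Y (Xf u v))) 1 := by
    intro j k l
    rw [rBC_formula hc heps hind j k l (hBC1 j k l) (hBC2 j k l)]
    simp [Finsupp.smul_single]
  have FCC : ∀ (i : Fin u) (j : Fin v) (k : Fin u) (l : Fin v), r (single (yC i j, yC k l) 1)
      = single ((yC (σa k) (σb l) : Y (Xf u v)), (yC (τa i) (τb j) : Y (Xf u v))) 1
        + (-βb) • single ((yC (σa k) (σb l) : Y (Xf u v)), (yA (τa i) : Y (Xf u v))) 1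
        + βa • single ((yC (σa k) (σb l) : Y (Xf u v)), (yB (τb j) : Y (Xf u v))) 1
        + βb • single ((yA (σa k) : Y (Xf u v)), (yC (τa i) (τb j) : Y (Xf u v))) 1
        + (-βa) • single ((yB (σb l) : Y (Xf u v)), (yC (τa i) (τb j) : Y (Xf u v))) 1
        + Γ • single ((yA (σa k) : Y (Xf u v)), (yA (τa i) : Y (Xf u v))) 1
        + (βa * βb) • single ((yA (σa k) : Y (Xf u v)), (yB (τb j) : Y (Xf u v))) 1
        + (βa * βb) • single ((yB (σb l) : Y (Xf u v)), (yA (τa i) : Y (Xf u v))) 1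
        + (-Γ - 2 * (βa * βb)) • single ((yB (σb l) : Y (Xf u v)), (yB (τb j) : Y (Xf u v))) 1 := by
    intro i j k l
    rw [rCC_formula hc heps hind hAC1 hAC2 hCB1 hCB2 hCA1 hCA2 hBC1 hBC2 hGam i j k l]
    simp [Finsupp.smul_single]
  have KEYC := keyCCC hind hcomma hcommb FCA FCB FAC FBC FCC
  constructor
  · -- braid → condition
    intro hb
    unfold BraidEqR at hb
    have h0 := congrArg (fun (φ : Inc3 K (Xf u v) →ₗ[K] Inc3 K (Xf u v)) =>
      φ (single ((yC ⟨0, hu⟩ ⟨0, hv⟩ : Y (Xf u v)), (yC ⟨0, hu⟩ ⟨0, hv⟩ : Y (Xf u v)),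
        (yC ⟨0, hu⟩ ⟨0, hv⟩ : Y (Xf u v))) 1)) hb
    simp only [LinearMap.comp_apply] at h0
    have hK := KEYC ⟨0, hu⟩ ⟨0, hv⟩ ⟨0, hu⟩ ⟨0, hv⟩ ⟨0, hu⟩ ⟨0, hv⟩
    rw [h0] at hK
    have h4 := congrArg (fun w : Inc3 K (Xf u v) =>
      w ((yA (σa (σa ⟨0, hu⟩)) : Y (Xf u v)), (yA (σa (τa ⟨0, hu⟩)) : Y (Xf u v)),
        (yA (τa (τa ⟨0, hu⟩)) : Y (Xf u v)))) hK
    simp only [Finsupp.add_apply, Finsupp.sub_apply, Finsupp.smul_apply,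
      Finsupp.single_apply, smul_eq_mul, Prod.mk.injEq, yB_ne_yA, false_and, and_false,
      if_false, if_true, mul_one, mul_zero, sub_zero] at h4
    by_cases hbe : βa = βb
    · exact Or.inl hbe
    · refine Or.inr ⟨hbe, ?_⟩
      have hc0 : (βa - βb) * (2 * Γ + 2 * βb * βa) = 0 := by linear_combination -h4
      rcases mul_eq_zero.mp hc0 with h5 | h5
      · exact absurd (sub_eq_zero.mp h5) hbe
      · exact h5
  · -- condition → braid
    intro hcond
    have hobs : (βa - βb) * (2 * Γ + 2 * βb * βa) = 0 := by
      rcases hcond with h1 | ⟨h1, h2⟩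
      · rw [h1, sub_self, zero_mul]
      · rw [h2, mul_zero]
    unfold BraidEqR
    apply Finsupp.lhom_ext
    intro t b
    obtain ⟨p, q, s⟩ := t
    have hb1 : (single ((p, q, s)) b : Inc3 K (Xf u v)) = b • single (p, q, s) 1 := by
      rw [Finsupp.smul_single, smul_eq_mul, mul_one]
    simp only [LinearMap.comp_apply, hb1, map_smul]
    congr 1
    rcases yCases p with ⟨i1, rfl⟩ | ⟨j1, rfl⟩ | ⟨i1, j1, rfl⟩ <;>
      rcases yCases q with ⟨i2, rfl⟩ | ⟨j2, rfl⟩ | ⟨i2, j2, rfl⟩ <;>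
        rcases yCases s with ⟨i3, rfl⟩ | ⟨j3, rfl⟩ | ⟨i3, j3, rfl⟩
    all_goals first
      | (rw [KEYC i1 j1 i2 j2 i3 j3, hobs]
         simp only [zero_smul, add_zero, sub_zero])
      | (simp only [r12_single', r23_single', map_add, map_smul, Finsupp.mapDomain_add,
           Finsupp.mapDomain_smul, Finsupp.mapDomain_single, rAA hind, rAB hind, rBA hind,
           rBB hind, FCA, FCB, FAC, FBC, FCC, comm_a hcomma, comm_b hcommb, one_smul]
         try (match_scalars <;> ring))

end BraidPaper
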